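/- arXiv:2011.06360 — 3 statements merged into one kernel-verified Lean document; each statement's English description precedes it below -/
import Mathlib

section
/- There exists 0 < c₀ < 1/2 such that for every ε ∈ (0, c₀) there exists an open neighborhood H_ε ⊆ H of the identity matrix such that for all h ∈ H_ε and all T > 10, one has E⁻_{T,ε} ⊆ h·E_T ⊆ E⁺_{T,ε}, where h·E_T = {h(x,y) : (x,y) ∈ E_T} is the image of E_T under the linear map h. -/
open MeasureTheory Set Filter

/-- The set `E_T` from the paper, as a subset of `ℝ^m × ℝ^n`. -/
def ESet (m n : ℕ) (ψ : ℝ → ℝ) (ν₁ : (Fin m → ℝ) → ℝ) (ν₂ : (Fin n → ℝ) → ℝ)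
    (T : ℝ) : Set ((Fin m → ℝ) × (Fin n → ℝ)) :=
  {p | ν₁ p.1 ^ m < ψ (ν₂ p.2 ^ n) ∧ 1 ≤ ν₂ p.2 ^ n ∧ ν₂ p.2 ^ n < T}

/-- The set `E⁻_{T,ε}` from the paper. -/
def Eminus (m n : ℕ) (ψ : ℝ → ℝ) (ν₁ : (Fin m → ℝ) → ℝ) (ν₂ : (Fin n → ℝ) → ℝ)
    (ε T : ℝ) : Set ((Fin m → ℝ) × (Fin n → ℝ)) :=
  {p | ν₁ p.1 ^ m < (1 + ε)⁻¹ * ψ ((1 + ε) * ν₂ p.2 ^ n)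
    ∧ 3/2 ≤ ν₂ p.2 ^ n ∧ ν₂ p.2 ^ n < (1 + ε)⁻¹ * T}

/-- The set `E'_{T,ε}` from the paper. -/
def Eprime (m n : ℕ) (ψ : ℝ → ℝ) (ν₁ : (Fin m → ℝ) → ℝ) (ν₂ : (Fin n → ℝ) → ℝ)
    (ε T : ℝ) : Set ((Fin m → ℝ) × (Fin n → ℝ)) :=
  {p | ν₁ p.1 ^ m < (1 + ε) * ψ ((1 + ε)⁻¹ * ν₂ p.2 ^ n)
    ∧ 3/2 ≤ ν₂ p.2 ^ n ∧ ν₂ p.2 ^ n < (1 + ε) * T}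

/-- The set `C₀` from the paper. -/
def Czero (m n : ℕ) (ψ : ℝ → ℝ) (ν₁ : (Fin m → ℝ) → ℝ) (ν₂ : (Fin n → ℝ) → ℝ) :
    Set ((Fin m → ℝ) × (Fin n → ℝ)) :=
  {p | ν₁ p.1 ^ m < 2 * ψ 1 ∧ 1/2 < ν₂ p.2 ^ n ∧ ν₂ p.2 ^ n ≤ 3/2}

/-- The set `E⁺_{T,ε} = E'_{T,ε} ∪ C₀` from the paper. -/
def Eplus (m n : ℕ) (ψ : ℝ → ℝ) (ν₁ : (Fin m → ℝ) → ℝ) (ν₂ : (Fin n → ℝ) → ℝ)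
    (ε T : ℝ) : Set ((Fin m → ℝ) × (Fin n → ℝ)) :=
  Eprime m n ψ ν₁ ν₂ ε T ∪ Czero m n ψ ν₁ ν₂

/-- The group `H` of block lower-triangular matrices in `SL_d(ℝ)`, viewed as a set of
matrices indexed by `Fin m ⊕ Fin n`. -/
def HSet (m n : ℕ) : Set (Matrix (Fin m ⊕ Fin n) (Fin m ⊕ Fin n) ℝ) :=
  {h | h.det = 1 ∧ ∀ (i : Fin m) (j : Fin n), h (Sum.inl i) (Sum.inr j) = 0}

/-- The image of a subset of `ℝ^m × ℝ^n` under the linear map given by a matrix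
indexed by `Fin m ⊕ Fin n`. -/
def matImage (m n : ℕ) (h : Matrix (Fin m ⊕ Fin n) (Fin m ⊕ Fin n) ℝ)
    (E : Set ((Fin m → ℝ) × (Fin n → ℝ))) : Set ((Fin m → ℝ) × (Fin n → ℝ)) :=
  (fun p => ((h.mulVec (Sum.elim p.1 p.2)) ∘ Sum.inl,
             (h.mulVec (Sum.elim p.1 p.2)) ∘ Sum.inr)) '' E


-- Bernoulli-type upper bound
lemma bern_upper (k : ℕ) {t : ℝ} (h0 : 0 ≤ t) (h1 : t ≤ 1) :
    (1 + t) ^ k ≤ 1 + ((2:ℝ) ^ k - 1) * t := by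
  induction k with
  | zero => simp
  | succ k ih =>
    have h2 : (1:ℝ) ≤ 2 ^ k := one_le_pow₀ (by norm_num)
    have hnn : (0:ℝ) ≤ 1 + t := by linarith
    calc (1+t)^(k+1) = (1+t)^k * (1+t) := by ring
      _ ≤ (1 + ((2:ℝ)^k - 1)*t) * (1+t) := mul_le_mul_of_nonneg_right ih hnn
      _ ≤ 1 + ((2:ℝ)^(k+1) - 1)*t := by
          rw [pow_succ]
          nlinarith [mul_nonneg (by linarith : (0:ℝ) ≤ 2^k - 1) (mul_nonneg h0 (by linarith : (0:ℝ) ≤ 1 - t))]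

lemma pow_upper {k : ℕ} {b b' θ ε : ℝ} (hb : 0 ≤ b) (hθ0 : 0 ≤ θ) (hθ1 : θ ≤ 1)
    (hbb : |b' - b| ≤ θ * b) (hcond : ((2:ℝ) ^ k - 1) * θ ≤ ε) :
    b' ^ k ≤ (1 + ε) * b ^ k := by
  have h1 : |b'| ≤ (1 + θ) * b := by
    have h := abs_sub_abs_le_abs_sub b' b
    rw [abs_of_nonneg hb] at h
    nlinarith
  have hbk : 0 ≤ b ^ k := pow_nonneg hb k
  calc b'^k ≤ |b'|^k := by rw [← abs_pow]; exact le_abs_self _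
    _ ≤ ((1+θ)*b)^k := pow_le_pow_left₀ (abs_nonneg _) h1 k
    _ = (1+θ)^k * b^k := mul_pow _ _ _
    _ ≤ (1 + ((2:ℝ)^k - 1)*θ) * b^k :=
        mul_le_mul_of_nonneg_right (bern_upper k hθ0 hθ1) hbk
    _ ≤ (1+ε) * b^k := mul_le_mul_of_nonneg_right (by linarith) hbk

lemma pow_lower {k : ℕ} {b b' θ ε : ℝ} (hb : 0 ≤ b) (hθ0 : 0 ≤ θ) (hθ1 : θ ≤ 1)
    (hbb : |b' - b| ≤ θ * b) (hε0 : 0 < ε) (hε1 : ε ≤ 1) (hcond : (k:ℝ) * θ ≤ ε / 2) :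
    (1 + ε)⁻¹ * b ^ k ≤ b' ^ k := by
  have h1 : (1 - θ) * b ≤ b' := by
    have h := (abs_le.mp hbb).1
    nlinarith
  have h0 : 0 ≤ (1 - θ) * b := mul_nonneg (by linarith) hb
  have h2 : ((1-θ)*b)^k ≤ b'^k := pow_le_pow_left₀ h0 h1 k
  have h3 : (1 - (k:ℝ)*θ) ≤ (1-θ)^k := by
    have h := one_add_mul_le_pow (a := -θ) (by linarith) k
    calc (1 - (k:ℝ)*θ) = 1 + (k:ℝ)*(-θ) := by ring
      _ ≤ (1 + -θ)^k := h
      _ = (1-θ)^k := by ring_nf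
  have hbk : 0 ≤ b^k := pow_nonneg hb k
  have h4 : (1 - (k:ℝ)*θ) * b^k ≤ b'^k := by
    calc (1 - (k:ℝ)*θ) * b^k ≤ (1-θ)^k * b^k := mul_le_mul_of_nonneg_right h3 hbk
      _ = ((1-θ)*b)^k := (mul_pow _ _ _).symm
      _ ≤ b'^k := h2
  have hp : (0:ℝ) < 1 + ε := by linarith
  have h5 : (1+ε)⁻¹ ≤ 1 - (k:ℝ)*θ := by
    rw [inv_le_iff_one_le_mul₀ hp]
    nlinarith
  calc (1+ε)⁻¹ * b^k ≤ (1 - (k:ℝ)*θ) * b^k := mul_le_mul_of_nonneg_right h5 hbk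
    _ ≤ b'^k := h4

lemma norm_bounds {k : ℕ} (hk : 1 ≤ k) (ν : (Fin k → ℝ) → ℝ)
    (hadd : ∀ x y, ν (x + y) ≤ ν x + ν y)
    (hsmul : ∀ (c : ℝ) x, ν (c • x) = |c| * ν x)
    (hdef : ∀ x, ν x = 0 ↔ x = 0) :
    ∃ c C : ℝ, 0 < c ∧ 0 < C ∧ (∀ x, c * ‖x‖ ≤ ν x) ∧ (∀ x, ν x ≤ C * ‖x‖) ∧
      (∀ x z, |ν x - ν z| ≤ C * ‖x - z‖) := by
  classical
  have hν0 : ν 0 = 0 := (hdef 0).mpr rfl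
  have hneg : ∀ x, ν (-x) = ν x := by
    intro x
    have := hsmul (-1) x
    simpa using this
  have hnn : ∀ x, 0 ≤ ν x := by
    intro x
    have h := hadd x (-x)
    rw [add_neg_cancel, hν0, hneg] at h
    linarith
  have hsub : ∀ x z, ν x - ν z ≤ ν (x - z) := by
    intro x z
    have h := hadd (x - z) z
    rw [sub_add_cancel] at h
    linarith
  -- upper bound constant
  set C0 : ℝ := ∑ i : Fin k, ν (fun j => if i = j then (1:ℝ) else 0) with hC0
  have hC0nn : 0 ≤ C0 := Finset.sum_nonneg fun i _ => hnn _
  have hsumle : ∀ (s : Finset (Fin k)) (f : Fin k → (Fin k → ℝ)),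
      ν (∑ i ∈ s, f i) ≤ ∑ i ∈ s, ν (f i) := by
    intro s f
    induction s using Finset.cons_induction with
    | empty => simp [hν0]
    | cons a s ha ih =>
      rw [Finset.sum_cons, Finset.sum_cons]
      exact le_trans (hadd _ _) (by linarith)
  have hupper : ∀ x, ν x ≤ C0 * ‖x‖ := by
    intro x
    have h1 : ν x ≤ ∑ i : Fin k, ν (x i • fun j => if i = j then (1:ℝ) else 0) := by
      calc ν x = ν (∑ i : Fin k, x i • fun j => if i = j then (1:ℝ) else 0) := by
            rw [← pi_eq_sum_univ]
        _ ≤ _ := hsumle _ _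
    have h2 : ∀ i : Fin k, ν (x i • fun j => if i = j then (1:ℝ) else 0)
        ≤ ‖x‖ * ν (fun j => if i = j then (1:ℝ) else 0) := by
      intro i
      rw [hsmul]
      apply mul_le_mul_of_nonneg_right _ (hnn _)
      rw [← Real.norm_eq_abs]
      exact norm_le_pi_norm x i
    calc ν x ≤ ∑ i : Fin k, ν (x i • fun j => if i = j then (1:ℝ) else 0) := h1
      _ ≤ ∑ i : Fin k, ‖x‖ * ν (fun j => if i = j then (1:ℝ) else 0) :=
          Finset.sum_le_sum fun i _ => h2 i
      _ = C0 * ‖x‖ := by rw [← Finset.mul_sum, hC0, mul_comm]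
  set C : ℝ := C0 + 1 with hC
  have hCpos : 0 < C := by linarith
  have hupper' : ∀ x, ν x ≤ C * ‖x‖ := by
    intro x
    calc ν x ≤ C0 * ‖x‖ := hupper x
      _ ≤ C * ‖x‖ := mul_le_mul_of_nonneg_right (by linarith) (norm_nonneg _)
  have hlip : ∀ x z, |ν x - ν z| ≤ C * ‖x - z‖ := by
    intro x z
    rw [abs_sub_le_iff]
    constructor
    · exact le_trans (hsub x z) (hupper' _)
    · calc ν z - ν x ≤ ν (z - x) := hsub z x
        _ = ν (x - z) := by rw [← hneg (x - z), neg_sub]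
        _ ≤ C * ‖x - z‖ := hupper' _
  -- continuity
  have hcont : Continuous ν := by
    have : LipschitzWith (Real.toNNReal C) ν := by
      apply LipschitzWith.of_dist_le_mul
      intro x y
      rw [Real.dist_eq, dist_eq_norm, Real.coe_toNNReal C hCpos.le]
      exact hlip x y
    exact this.continuous
  -- lower bound via compactness
  haveI : Nonempty (Fin k) := ⟨⟨0, hk⟩⟩
  obtain ⟨z, hz, hmin⟩ := (isCompact_sphere (0 : Fin k → ℝ) 1).exists_isMinOn
    (NormedSpace.sphere_nonempty.mpr zero_le_one) hcont.continuousOn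
  have hz1 : ‖z‖ = 1 := by simpa using mem_sphere_zero_iff_norm.mp hz
  have hzne : z ≠ 0 := by
    intro h
    rw [h] at hz1
    simp at hz1
  have hcpos : 0 < ν z := by
    rcases lt_or_eq_of_le (hnn z) with h | h
    · exact h
    · exact absurd ((hdef z).mp h.symm) hzne
  have hlower : ∀ x, ν z * ‖x‖ ≤ ν x := by
    intro x
    rcases eq_or_ne x 0 with rfl | hx
    · simp [hν0]
    · have hnx : 0 < ‖x‖ := norm_pos_iff.mpr hx
      set u : Fin k → ℝ := ‖x‖⁻¹ • x with hu
      have hus : u ∈ Metric.sphere (0 : Fin k → ℝ) 1 := by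
        rw [mem_sphere_zero_iff_norm, hu, norm_smul, norm_inv, norm_norm]
        field_simp
      have hzu : ν z ≤ ν u := isMinOn_iff.mp hmin u hus
      have hxu : x = ‖x‖ • u := by
        rw [hu, smul_smul, mul_inv_cancel₀ hnx.ne', one_smul]
      have hvx : ν x = ‖x‖ * ν u := by
        conv_lhs => rw [hxu]
        rw [hsmul, abs_of_nonneg (norm_nonneg x)]
      calc ν z * ‖x‖ ≤ ν u * ‖x‖ := mul_le_mul_of_nonneg_right hzu hnx.le
        _ = ν x := by rw [hvx]; ring
  exact ⟨ν z, C, hcpos, hCpos, hlower, hupper', hlip⟩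

lemma mulVec_close {m n : ℕ} {δ : ℝ} (hδ : 0 ≤ δ)
    (A : Matrix (Fin m ⊕ Fin n) (Fin m ⊕ Fin n) ℝ)
    (hA : ∀ i j, |A i j - (1 : Matrix (Fin m ⊕ Fin n) (Fin m ⊕ Fin n) ℝ) i j| ≤ δ)
    (u : (Fin m ⊕ Fin n) → ℝ) :
    ‖A.mulVec u - u‖ ≤ ((m:ℝ) + n) * δ * ‖u‖ := by
  have hrhs : 0 ≤ ((m:ℝ) + n) * δ * ‖u‖ := by positivity
  rw [pi_norm_le_iff_of_nonneg hrhs]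
  intro i
  have h0 : ∑ j, (1 : Matrix (Fin m ⊕ Fin n) (Fin m ⊕ Fin n) ℝ) i j * u j = u i := by
    simp [Matrix.one_apply]
  have h1 : (A.mulVec u - u) i = ∑ j, (A i j - (1 : Matrix (Fin m ⊕ Fin n) (Fin m ⊕ Fin n) ℝ) i j) * u j := by
    rw [Pi.sub_apply]
    conv_lhs => rw [← h0]
    simp [Matrix.mulVec, dotProduct, sub_mul, Finset.sum_sub_distrib]
  rw [Real.norm_eq_abs, h1]
  calc |∑ j, (A i j - (1 : Matrix (Fin m ⊕ Fin n) (Fin m ⊕ Fin n) ℝ) i j) * u j|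
      ≤ ∑ j, |(A i j - (1 : Matrix (Fin m ⊕ Fin n) (Fin m ⊕ Fin n) ℝ) i j) * u j| :=
        Finset.abs_sum_le_sum_abs _ _
    _ ≤ ∑ _j : Fin m ⊕ Fin n, δ * ‖u‖ := by
        apply Finset.sum_le_sum
        intro j _
        rw [abs_mul]
        apply mul_le_mul (hA i j) _ (abs_nonneg _) hδ
        rw [← Real.norm_eq_abs]
        exact norm_le_pi_norm u j
    _ = ((m:ℝ) + n) * δ * ‖u‖ := by
        rw [Finset.sum_const, Finset.card_univ, nsmul_eq_mul]
        simp
        ring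

lemma mulVec_inl_eq {m n : ℕ} (A : Matrix (Fin m ⊕ Fin n) (Fin m ⊕ Fin n) ℝ)
    (hA : ∀ i j, A (Sum.inl i) (Sum.inr j) = 0) (x : Fin m → ℝ) (y : Fin n → ℝ) (i : Fin m) :
    A.mulVec (Sum.elim x y) (Sum.inl i) = A.mulVec (Sum.elim x 0) (Sum.inl i) := by
  simp [Matrix.mulVec, dotProduct, Fintype.sum_sum_type, hA]

lemma norm_elim_le {m n : ℕ} (x : Fin m → ℝ) (y : Fin n → ℝ) :
    ‖Sum.elim x y‖ ≤ ‖x‖ + ‖y‖ := by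
  rw [pi_norm_le_iff_of_nonneg (by positivity)]
  rintro (i | j)
  · simpa using le_trans (norm_le_pi_norm x i) (by linarith [norm_nonneg y])
  · simpa using le_trans (norm_le_pi_norm y j) (by linarith [norm_nonneg x])

lemma norm_elim_zero {m n : ℕ} (x : Fin m → ℝ) :
    ‖Sum.elim x (0 : Fin n → ℝ)‖ ≤ ‖x‖ := by
  rw [pi_norm_le_iff_of_nonneg (norm_nonneg x)]
  rintro (i | j)
  · simpa using norm_le_pi_norm x i
  · simpa using norm_nonneg x

lemma key_est {m n : ℕ} {δ C₁ C₂ : ℝ} (hδ : 0 ≤ δ)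
    (ν₁ : (Fin m → ℝ) → ℝ) (ν₂ : (Fin n → ℝ) → ℝ)
    (hlip₁ : ∀ x z, |ν₁ x - ν₁ z| ≤ C₁ * ‖x - z‖)
    (hlip₂ : ∀ x z, |ν₂ x - ν₂ z| ≤ C₂ * ‖x - z‖)
    (hC₁ : 0 ≤ C₁) (hC₂ : 0 ≤ C₂)
    (g : Matrix (Fin m ⊕ Fin n) (Fin m ⊕ Fin n) ℝ)
    (hg12 : ∀ i j, g (Sum.inl i) (Sum.inr j) = 0)
    (hgδ : ∀ i j, |g i j - (1 : Matrix (Fin m ⊕ Fin n) (Fin m ⊕ Fin n) ℝ) i j| ≤ δ)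
    (x : Fin m → ℝ) (y : Fin n → ℝ) :
    |ν₁ (g.mulVec (Sum.elim x y) ∘ Sum.inl) - ν₁ x| ≤ C₁ * (((m:ℝ)+n) * δ * ‖x‖) ∧
    |ν₂ (g.mulVec (Sum.elim x y) ∘ Sum.inr) - ν₂ y| ≤ C₂ * (((m:ℝ)+n) * δ * (‖x‖ + ‖y‖)) := by
  constructor
  · have h1 : ‖g.mulVec (Sum.elim x y) ∘ Sum.inl - x‖ ≤ ((m:ℝ)+n) * δ * ‖x‖ := by
      have hb := mulVec_close hδ g hgδ (Sum.elim x (0 : Fin n → ℝ))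
      have step1 : ‖g.mulVec (Sum.elim x y) ∘ Sum.inl - x‖
          ≤ ‖g.mulVec (Sum.elim x (0 : Fin n → ℝ)) - Sum.elim x (0 : Fin n → ℝ)‖ := by
        rw [pi_norm_le_iff_of_nonneg (norm_nonneg _)]
        intro i
        have heq : (g.mulVec (Sum.elim x y) ∘ Sum.inl - x) i
            = (g.mulVec (Sum.elim x (0 : Fin n → ℝ)) - Sum.elim x (0 : Fin n → ℝ)) (Sum.inl i) := by
          simp [mulVec_inl_eq g hg12 x y i]
        rw [heq]
        exact norm_le_pi_norm _ _
      calc ‖g.mulVec (Sum.elim x y) ∘ Sum.inl - x‖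
          ≤ ‖g.mulVec (Sum.elim x (0:Fin n → ℝ)) - Sum.elim x (0:Fin n → ℝ)‖ := step1
        _ ≤ ((m:ℝ)+n) * δ * ‖Sum.elim x (0:Fin n → ℝ)‖ := hb
        _ ≤ ((m:ℝ)+n) * δ * ‖x‖ :=
            mul_le_mul_of_nonneg_left (norm_elim_zero x) (by positivity)
    exact le_trans (hlip₁ _ _) (mul_le_mul_of_nonneg_left h1 hC₁)
  · have h1 : ‖g.mulVec (Sum.elim x y) ∘ Sum.inr - y‖ ≤ ((m:ℝ)+n) * δ * (‖x‖ + ‖y‖) := by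
      have hb := mulVec_close hδ g hgδ (Sum.elim x y)
      have step1 : ‖g.mulVec (Sum.elim x y) ∘ Sum.inr - y‖
          ≤ ‖g.mulVec (Sum.elim x y) - Sum.elim x y‖ := by
        rw [pi_norm_le_iff_of_nonneg (norm_nonneg _)]
        intro j
        have heq : (g.mulVec (Sum.elim x y) ∘ Sum.inr - y) j
            = (g.mulVec (Sum.elim x y) - Sum.elim x y) (Sum.inr j) := by simp
        rw [heq]
        exact norm_le_pi_norm _ _
      calc ‖g.mulVec (Sum.elim x y) ∘ Sum.inr - y‖
          ≤ ‖g.mulVec (Sum.elim x y) - Sum.elim x y‖ := step1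
        _ ≤ ((m:ℝ)+n) * δ * ‖Sum.elim x y‖ := hb
        _ ≤ ((m:ℝ)+n) * δ * (‖x‖ + ‖y‖) :=
            mul_le_mul_of_nonneg_left (norm_elim_le x y) (by positivity)
    exact le_trans (hlip₂ _ _) (mul_le_mul_of_nonneg_left h1 hC₂)

lemma adjugate_block_zero {m n : ℕ} (h : Matrix (Fin m ⊕ Fin n) (Fin m ⊕ Fin n) ℝ)
    (hdet : h.det = 1) (h12 : ∀ i j, h (Sum.inl i) (Sum.inr j) = 0) (i : Fin m) (j : Fin n) :
    h.adjugate (Sum.inl i) (Sum.inr j) = 0 := by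
  classical
  have htb : h.toBlocks₁₂ = 0 := by
    ext a b
    simp [Matrix.toBlocks₁₂, h12]
  have hb : h = Matrix.fromBlocks h.toBlocks₁₁ 0 h.toBlocks₂₁ h.toBlocks₂₂ := by
    rw [← htb, Matrix.fromBlocks_toBlocks]
  have hdet2 : h.toBlocks₁₁.det * h.toBlocks₂₂.det = 1 := by
    rw [← Matrix.det_fromBlocks_zero₁₂ h.toBlocks₁₁ h.toBlocks₂₁ h.toBlocks₂₂, ← hb, hdet]
  have hD : IsUnit h.toBlocks₂₂.det :=
    IsUnit.of_mul_eq_one _ (by rw [mul_comm]; exact hdet2)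
  haveI := h.toBlocks₂₂.invertibleOfIsUnitDet hD
  have hGh : h.adjugate * h = 1 := by rw [Matrix.adjugate_mul, hdet, one_smul]
  have hz : h.adjugate.toBlocks₁₂ * h.toBlocks₂₂ = 0 := by
    ext a b
    have h0 : (h.adjugate * h) (Sum.inl a) (Sum.inr b) = 0 := by
      rw [hGh]
      exact Matrix.one_apply_ne (by simp)
    rw [Matrix.mul_apply, Fintype.sum_sum_type] at h0
    simp only [h12, mul_zero, Finset.sum_const_zero, zero_add] at h0
    rw [Matrix.mul_apply]
    simpa [Matrix.toBlocks₁₂, Matrix.toBlocks₂₂] using h0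
  have hz2 : h.adjugate.toBlocks₁₂ = 0 := by
    calc h.adjugate.toBlocks₁₂
        = h.adjugate.toBlocks₁₂ * (h.toBlocks₂₂ * ⅟ h.toBlocks₂₂) := by
          rw [mul_invOf_self, Matrix.mul_one]
      _ = (h.adjugate.toBlocks₁₂ * h.toBlocks₂₂) * ⅟ h.toBlocks₂₂ := by rw [Matrix.mul_assoc]
      _ = 0 := by rw [hz, Matrix.zero_mul]
  have := congrFun (congrFun hz2 i) j
  simpa [Matrix.toBlocks₁₂] using this

lemma isOpen_matrix_cond {m n : ℕ} {δ : ℝ} :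
    IsOpen {A : Matrix (Fin m ⊕ Fin n) (Fin m ⊕ Fin n) ℝ |
      (∀ i j, |A i j - (1 : Matrix (Fin m ⊕ Fin n) (Fin m ⊕ Fin n) ℝ) i j| < δ) ∧
      (∀ i j, |A.adjugate i j - (1 : Matrix (Fin m ⊕ Fin n) (Fin m ⊕ Fin n) ℝ) i j| < δ)} := by
  have heq : {A : Matrix (Fin m ⊕ Fin n) (Fin m ⊕ Fin n) ℝ |
      (∀ i j, |A i j - (1 : Matrix (Fin m ⊕ Fin n) (Fin m ⊕ Fin n) ℝ) i j| < δ) ∧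
      (∀ i j, |A.adjugate i j - (1 : Matrix (Fin m ⊕ Fin n) (Fin m ⊕ Fin n) ℝ) i j| < δ)}
    = (⋂ i, ⋂ j, {A : Matrix (Fin m ⊕ Fin n) (Fin m ⊕ Fin n) ℝ |
        |A i j - (1 : Matrix (Fin m ⊕ Fin n) (Fin m ⊕ Fin n) ℝ) i j| < δ})
      ∩ (⋂ i, ⋂ j, {A : Matrix (Fin m ⊕ Fin n) (Fin m ⊕ Fin n) ℝ |
        |A.adjugate i j - (1 : Matrix (Fin m ⊕ Fin n) (Fin m ⊕ Fin n) ℝ) i j| < δ}) := by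
    ext A
    simp only [Set.mem_setOf_eq, Set.mem_inter_iff, Set.mem_iInter]
  rw [heq]
  apply IsOpen.inter
  · apply isOpen_iInter_of_finite
    intro i
    apply isOpen_iInter_of_finite
    intro j
    exact isOpen_lt (((continuous_id.matrix_elem i j).sub continuous_const).abs) continuous_const
  · apply isOpen_iInter_of_finite
    intro i
    apply isOpen_iInter_of_finite
    intro j
    exact isOpen_lt (((continuous_id.matrix_adjugate.matrix_elem i j).sub continuous_const).abs)
      continuous_const

lemma est_wrap {m n : ℕ} {δ' δt c₁ C₁ c₂ C₂ A₀ K₁ M : ℝ}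
    (hc₁ : 0 < c₁) (hC₁ : 0 < C₁) (hc₂ : 0 < c₂) (hC₂ : 0 < C₂)
    (hδ' : 0 ≤ δ') (hδt : 0 ≤ δt) (hsum : ((m:ℝ) + n) * δ' = δt)
    (hK₁ : K₁ = C₁ / c₁) (hM : M = C₂ * (A₀ / c₁ + 1 / c₂)) (hA₀ : 0 ≤ A₀)
    (ν₁ : (Fin m → ℝ) → ℝ) (ν₂ : (Fin n → ℝ) → ℝ)
    (hlow₁ : ∀ x, c₁ * ‖x‖ ≤ ν₁ x) (hlip₁ : ∀ x z, |ν₁ x - ν₁ z| ≤ C₁ * ‖x - z‖)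
    (hlow₂ : ∀ y, c₂ * ‖y‖ ≤ ν₂ y) (hlip₂ : ∀ y z, |ν₂ y - ν₂ z| ≤ C₂ * ‖y - z‖)
    (g : Matrix (Fin m ⊕ Fin n) (Fin m ⊕ Fin n) ℝ)
    (hg12 : ∀ i j, g (Sum.inl i) (Sum.inr j) = 0)
    (hgδ : ∀ i j, |g i j - (1 : Matrix (Fin m ⊕ Fin n) (Fin m ⊕ Fin n) ℝ) i j| ≤ δ')
    (x : Fin m → ℝ) (y : Fin n → ℝ) (hxA : ν₁ x ≤ A₀) (hy1 : 1 ≤ ν₂ y) :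
    |ν₁ (g.mulVec (Sum.elim x y) ∘ Sum.inl) - ν₁ x| ≤ δt * K₁ * ν₁ x ∧
    |ν₂ (g.mulVec (Sum.elim x y) ∘ Sum.inr) - ν₂ y| ≤ δt * M * ν₂ y := by
  obtain ⟨e1, e2⟩ := key_est hδ' ν₁ ν₂ hlip₁ hlip₂ hC₁.le hC₂.le g hg12 hgδ x y
  have hK₁pos : 0 < K₁ := by rw [hK₁]; positivity
  have hx1 : ‖x‖ ≤ ν₁ x / c₁ := by
    rw [le_div_iff₀ hc₁]
    linarith [hlow₁ x]
  have hy2 : ‖y‖ ≤ ν₂ y / c₂ := by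
    rw [le_div_iff₀ hc₂]
    linarith [hlow₂ y]
  constructor
  · calc |ν₁ (g.mulVec (Sum.elim x y) ∘ Sum.inl) - ν₁ x|
        ≤ C₁ * (((m:ℝ)+n) * δ' * ‖x‖) := e1
      _ = δt * K₁ * (c₁ * ‖x‖) := by rw [hsum, hK₁]; field_simp
      _ ≤ δt * K₁ * ν₁ x := mul_le_mul_of_nonneg_left (hlow₁ x) (by positivity)
  · have hν₂pos : 0 < ν₂ y := lt_of_lt_of_le one_pos hy1
    calc |ν₂ (g.mulVec (Sum.elim x y) ∘ Sum.inr) - ν₂ y|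
        ≤ C₂ * (((m:ℝ)+n) * δ' * (‖x‖ + ‖y‖)) := e2
      _ = δt * C₂ * (‖x‖ + ‖y‖) := by rw [hsum]; ring
      _ ≤ δt * C₂ * (ν₁ x / c₁ + ν₂ y / c₂) :=
          mul_le_mul_of_nonneg_left (add_le_add hx1 hy2) (by positivity)
      _ ≤ δt * C₂ * (A₀ * ν₂ y / c₁ + ν₂ y / c₂) := by
          apply mul_le_mul_of_nonneg_left _ (by positivity)
          apply add_le_add _ le_rfl
          apply (div_le_div_iff_of_pos_right hc₁).mpr
          nlinarith
      _ = δt * M * ν₂ y := by rw [hM]; field_simp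

lemma fbounds {m n : ℕ} {K₁ M ε δt : ℝ} (hK₁ : 0 < K₁) (hM : 0 < M) (hε : 0 < ε)
    (hε1 : ε ≤ 1) (hδt : 0 ≤ δt)
    (heq : ε = 2^m * (δt * K₁) + 2^n * (δt * M) + 2 * n * (δt * M) + δt) :
    ((2:ℝ)^m - 1) * (δt * K₁) ≤ ε ∧ ((2:ℝ)^n - 1) * (δt * M) ≤ ε ∧
      (n:ℝ) * (δt * M) ≤ ε / 2 ∧ δt * K₁ ≤ 1 ∧ δt * M ≤ 1 := by
  have h2m : (1:ℝ) ≤ 2^m := one_le_pow₀ (by norm_num)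
  have h2n : (1:ℝ) ≤ 2^n := one_le_pow₀ (by norm_num)
  have hX : 0 ≤ δt * K₁ := mul_nonneg hδt hK₁.le
  have hY : 0 ≤ δt * M := mul_nonneg hδt hM.le
  have hA : 0 ≤ ((2:ℝ)^m - 1) * (δt * K₁) := mul_nonneg (by linarith) hX
  have hBB : 0 ≤ ((2:ℝ)^n - 1) * (δt * M) := mul_nonneg (by linarith) hY
  have hC : 0 ≤ (n:ℝ) * (δt * M) := mul_nonneg (Nat.cast_nonneg n) hY
  refine ⟨by nlinarith, by nlinarith, by nlinarith, by nlinarith, by nlinarith⟩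

set_option maxHeartbeats 1000000 in
theorem ET_stable_under_perturbation (m n : ℕ) (hm : 1 ≤ m) (hn : 1 ≤ n)
    (ψ : ℝ → ℝ)
    (hψpos : ∀ t : ℝ, 1 ≤ t → 0 < ψ t)
    (hψcont : ContinuousOn ψ (Set.Ici 1))
    (hψanti : AntitoneOn ψ (Set.Ici 1))
    (ν₁ : (Fin m → ℝ) → ℝ)
    (hν₁add : ∀ x y, ν₁ (x + y) ≤ ν₁ x + ν₁ y)
    (hν₁smul : ∀ (c : ℝ) x, ν₁ (c • x) = |c| * ν₁ x)
    (hν₁def : ∀ x, ν₁ x = 0 ↔ x = 0)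
    (ν₂ : (Fin n → ℝ) → ℝ)
    (hν₂add : ∀ x y, ν₂ (x + y) ≤ ν₂ x + ν₂ y)
    (hν₂smul : ∀ (c : ℝ) x, ν₂ (c • x) = |c| * ν₂ x)
    (hν₂def : ∀ x, ν₂ x = 0 ↔ x = 0) :
    ∃ c₀ : ℝ, 0 < c₀ ∧ c₀ < 1/2 ∧
      ∀ ε : ℝ, 0 < ε → ε < c₀ →
        ∃ U : Set (Matrix (Fin m ⊕ Fin n) (Fin m ⊕ Fin n) ℝ),
          IsOpen U ∧ (1 : Matrix (Fin m ⊕ Fin n) (Fin m ⊕ Fin n) ℝ) ∈ U ∧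
          ∀ h ∈ U ∩ HSet m n, ∀ T : ℝ, 10 < T →
            Eminus m n ψ ν₁ ν₂ ε T ⊆ matImage m n h (ESet m n ψ ν₁ ν₂ T)
            ∧ matImage m n h (ESet m n ψ ν₁ ν₂ T) ⊆ Eplus m n ψ ν₁ ν₂ ε T := by
  obtain ⟨c₁, C₁, hc₁, hC₁, hlow₁, hup₁, hlip₁⟩ := norm_bounds hm ν₁ hν₁add hν₁smul hν₁def
  obtain ⟨c₂, C₂, hc₂, hC₂, hlow₂, hup₂, hlip₂⟩ := norm_bounds hn ν₂ hν₂add hν₂smul hν₂def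
  have hν₁nn : ∀ x, 0 ≤ ν₁ x := fun x => le_trans (by positivity) (hlow₁ x)
  have hν₂nn : ∀ y, 0 ≤ ν₂ y := fun y => le_trans (by positivity) (hlow₂ y)
  have hψle : ∀ s t : ℝ, 1 ≤ s → s ≤ t → ψ t ≤ ψ s := fun s t hs hst =>
    hψanti (Set.mem_Ici.mpr hs) (Set.mem_Ici.mpr (le_trans hs hst)) hst
  refine ⟨1/4, by norm_num, by norm_num, ?_⟩
  intro ε hε hε4
  have hε1 : ε ≤ 1 := by linarith
  have h1εpos : (0:ℝ) < 1 + ε := by linarith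
  have hinvle1 : (1+ε)⁻¹ ≤ 1 := inv_le_one_of_one_le₀ (by linarith)
  have hinvnn : (0:ℝ) ≤ (1+ε)⁻¹ := by positivity
  have hinv23 : (2/3:ℝ) ≤ (1+ε)⁻¹ := by
    calc (2/3:ℝ) = (3/2)⁻¹ := by norm_num
      _ ≤ (1+ε)⁻¹ := inv_anti₀ h1εpos (by linarith)
  have hBpos : 0 < ψ 1 := hψpos 1 le_rfl
  obtain ⟨A₀, hA₀⟩ : ∃ x : ℝ, x = max 1 (ψ 1) := ⟨_, rfl⟩
  have hA₀1 : (1:ℝ) ≤ A₀ := hA₀ ▸ le_max_left _ _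
  have hA₀nn : (0:ℝ) ≤ A₀ := by linarith
  have hA₀B : ψ 1 ≤ A₀ := hA₀ ▸ le_max_right _ _
  obtain ⟨K₁, hK₁⟩ : ∃ x : ℝ, x = C₁ / c₁ := ⟨_, rfl⟩
  have hK₁pos : 0 < K₁ := by rw [hK₁]; positivity
  obtain ⟨M, hM⟩ : ∃ x : ℝ, x = C₂ * (A₀ / c₁ + 1 / c₂) := ⟨_, rfl⟩
  have hMpos : 0 < M := by
    rw [hM]
    have h1 : 0 < A₀ / c₁ := div_pos (by linarith) hc₁
    have h2 : 0 < 1 / c₂ := by positivity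
    exact mul_pos hC₂ (by linarith)
  obtain ⟨P, hP⟩ : ∃ x : ℝ, x = 2^m * K₁ + 2^n * M + 2 * n * M + 1 := ⟨_, rfl⟩
  have hPpos : 0 < P := by
    rw [hP]
    have h2m : (1:ℝ) ≤ 2^m := one_le_pow₀ (by norm_num)
    have h2n : (1:ℝ) ≤ 2^n := one_le_pow₀ (by norm_num)
    have : (0:ℝ) ≤ 2 * n * M := by positivity
    nlinarith
  obtain ⟨δt, hδt⟩ : ∃ x : ℝ, x = ε / P := ⟨_, rfl⟩
  have hδtpos : 0 < δt := by rw [hδt]; exact div_pos hε hPpos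
  have hmnpos : (0:ℝ) < (m:ℝ) + n := by
    have : (0:ℝ) < m := by exact_mod_cast hm
    positivity
  obtain ⟨δ', hδ'⟩ : ∃ x : ℝ, x = δt / ((m:ℝ) + n) := ⟨_, rfl⟩
  have hδ'pos : 0 < δ' := by rw [hδ']; exact div_pos hδtpos hmnpos
  have hsum : ((m:ℝ) + n) * δ' = δt := by
    rw [hδ']; field_simp
  have hε_eq : ε = 2^m * (δt * K₁) + 2^n * (δt * M) + 2 * n * (δt * M) + δt := by
    have hδtP : δt * P = ε := by rw [hδt]; field_simp
    rw [← hδtP, hP]; ring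
  obtain ⟨f1, f2, f3, f4, f5⟩ := fbounds hK₁pos hMpos hε hε1 hδtpos.le hε_eq
  have hnn1 : 0 ≤ δt * K₁ := by positivity
  have hnn2 : 0 ≤ δt * M := by positivity
  refine ⟨{A : Matrix (Fin m ⊕ Fin n) (Fin m ⊕ Fin n) ℝ |
      (∀ i j, |A i j - (1 : Matrix (Fin m ⊕ Fin n) (Fin m ⊕ Fin n) ℝ) i j| < δ') ∧
      (∀ i j, |A.adjugate i j - (1 : Matrix (Fin m ⊕ Fin n) (Fin m ⊕ Fin n) ℝ) i j| < δ')},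
    isOpen_matrix_cond, ⟨?_, ?_⟩, ?_⟩
  · intro i j; simpa using hδ'pos
  · intro i j; rw [Matrix.adjugate_one]; simpa using hδ'pos
  intro h hh T hT
  obtain ⟨⟨hnear, hadjnear⟩, hdet, h12⟩ := hh
  constructor
  · -- Eminus ⊆ matImage
    intro p hp
    simp only [Eminus, Set.mem_setOf_eq] at hp
    obtain ⟨hpa, hpb1, hpb2⟩ := hp
    have hg12 : ∀ i j, h.adjugate (Sum.inl i) (Sum.inr j) = 0 :=
      fun i j => adjugate_block_zero h hdet h12 i j
    have hgδ : ∀ i j, |h.adjugate i j - (1 : Matrix (Fin m ⊕ Fin n) (Fin m ⊕ Fin n) ℝ) i j| ≤ δ' :=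
      fun i j => (hadjnear i j).le
    have hhg : h * h.adjugate = 1 := by rw [Matrix.mul_adjugate, hdet, one_smul]
    have hb'1pow : (1:ℝ) ≤ ν₂ p.2 ^ n := le_trans (by norm_num) hpb1
    have hb'1 : 1 ≤ ν₂ p.2 := (one_le_pow_iff_of_nonneg (hν₂nn p.2) (by omega)).mp hb'1pow
    have hs1 : (1:ℝ) ≤ (1+ε) * ν₂ p.2 ^ n := by
      calc (1:ℝ) = 1 * 1 := by norm_num
        _ ≤ (1+ε) * ν₂ p.2 ^ n :=
            mul_le_mul (by linarith) hb'1pow (by norm_num) (by linarith)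
    have hpa' : ν₁ p.1 ^ m < ψ 1 := by
      have h2 : ψ ((1+ε) * ν₂ p.2 ^ n) ≤ ψ 1 := hψle 1 _ le_rfl hs1
      have hpos := hψpos _ hs1
      have h3 : (1+ε)⁻¹ * ψ ((1+ε) * ν₂ p.2 ^ n) ≤ ψ ((1+ε) * ν₂ p.2 ^ n) := by
        calc (1+ε)⁻¹ * ψ ((1+ε) * ν₂ p.2 ^ n) ≤ 1 * ψ ((1+ε) * ν₂ p.2 ^ n) :=
              mul_le_mul_of_nonneg_right hinvle1 hpos.le
          _ = ψ ((1+ε) * ν₂ p.2 ^ n) := one_mul _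
      exact lt_of_lt_of_le hpa (le_trans h3 h2)
    have ha'A : ν₁ p.1 ≤ A₀ := by
      rcases le_or_gt (ν₁ p.1) 1 with hle | hgt
      · exact le_trans hle hA₀1
      · have h1 : ν₁ p.1 ≤ ν₁ p.1 ^ m := le_self_pow₀ hgt.le (by omega)
        exact le_trans h1 (le_trans hpa'.le hA₀B)
    obtain ⟨est1, est2⟩ := est_wrap hc₁ hC₁ hc₂ hC₂ hδ'pos.le hδtpos.le hsum hK₁ hM hA₀nn
      ν₁ ν₂ hlow₁ hlip₁ hlow₂ hlip₂ h.adjugate hg12 hgδ p.1 p.2 ha'A hb'1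
    have haup : ν₁ (h.adjugate.mulVec (Sum.elim p.1 p.2) ∘ Sum.inl) ^ m ≤ (1+ε) * ν₁ p.1 ^ m :=
      pow_upper (hν₁nn p.1) hnn1 f4 est1 f1
    have hbup : ν₂ (h.adjugate.mulVec (Sum.elim p.1 p.2) ∘ Sum.inr) ^ n ≤ (1+ε) * ν₂ p.2 ^ n :=
      pow_upper (hν₂nn p.2) hnn2 f5 est2 f2
    have hblo : (1+ε)⁻¹ * ν₂ p.2 ^ n ≤ ν₂ (h.adjugate.mulVec (Sum.elim p.1 p.2) ∘ Sum.inr) ^ n :=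
      pow_lower (hν₂nn p.2) hnn2 f5 est2 hε hε1 f3
    simp only [matImage, Set.mem_image]
    refine ⟨(h.adjugate.mulVec (Sum.elim p.1 p.2) ∘ Sum.inl,
             h.adjugate.mulVec (Sum.elim p.1 p.2) ∘ Sum.inr), ?_, ?_⟩
    · simp only [ESet, Set.mem_setOf_eq]
      refine ⟨?_, ?_, ?_⟩
      · -- ν₁ x ^ m < ψ (ν₂ y ^ n)
        have hbn1 : (1:ℝ) ≤ ν₂ (h.adjugate.mulVec (Sum.elim p.1 p.2) ∘ Sum.inr) ^ n := by
          have hmm := mul_le_mul hinv23 hpb1 (by norm_num) hinvnn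
          calc (1:ℝ) = 2/3 * (3/2) := by norm_num
            _ ≤ (1+ε)⁻¹ * ν₂ p.2 ^ n := hmm
            _ ≤ _ := hblo
        have hstep : (1+ε) * ν₁ p.1 ^ m < ψ ((1+ε) * ν₂ p.2 ^ n) := by
          have hc : (1+ε) * ((1+ε)⁻¹ * ψ ((1+ε) * ν₂ p.2 ^ n)) = ψ ((1+ε) * ν₂ p.2 ^ n) := by
            rw [← mul_assoc, mul_inv_cancel₀ (by linarith), one_mul]
          calc (1+ε) * ν₁ p.1 ^ m < (1+ε) * ((1+ε)⁻¹ * ψ ((1+ε) * ν₂ p.2 ^ n)) :=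
                mul_lt_mul_of_pos_left hpa h1εpos
            _ = ψ ((1+ε) * ν₂ p.2 ^ n) := hc
        have hmono : ψ ((1+ε) * ν₂ p.2 ^ n)
            ≤ ψ (ν₂ (h.adjugate.mulVec (Sum.elim p.1 p.2) ∘ Sum.inr) ^ n) :=
          hψle _ _ hbn1 hbup
        exact lt_of_le_of_lt haup (lt_of_lt_of_le hstep hmono)
      · -- 1 ≤ ν₂ y ^ n
        have hmm := mul_le_mul hinv23 hpb1 (by norm_num) hinvnn
        calc (1:ℝ) = 2/3 * (3/2) := by norm_num
          _ ≤ (1+ε)⁻¹ * ν₂ p.2 ^ n := hmm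
          _ ≤ _ := hblo
      · -- ν₂ y ^ n < T
        have hTT : (1+ε) * ν₂ p.2 ^ n < (1+ε) * ((1+ε)⁻¹ * T) :=
          mul_lt_mul_of_pos_left hpb2 h1εpos
        rw [← mul_assoc, mul_inv_cancel₀ (by linarith), one_mul] at hTT
        exact lt_of_le_of_lt hbup hTT
    · -- the image equation
      have hw : Sum.elim (h.adjugate.mulVec (Sum.elim p.1 p.2) ∘ Sum.inl)
          (h.adjugate.mulVec (Sum.elim p.1 p.2) ∘ Sum.inr)
          = h.adjugate.mulVec (Sum.elim p.1 p.2) := Sum.elim_comp_inl_inr _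
      simp only [hw]
      have hv : h.mulVec (h.adjugate.mulVec (Sum.elim p.1 p.2)) = Sum.elim p.1 p.2 := by
        rw [Matrix.mulVec_mulVec, hhg, Matrix.one_mulVec]
      rw [hv]
      exact Prod.ext (by simp) (by simp)
  · -- matImage ⊆ Eplus
    rintro z hz
    simp only [matImage, Set.mem_image] at hz
    obtain ⟨q, hq, rfl⟩ := hz
    simp only [ESet, Set.mem_setOf_eq] at hq
    obtain ⟨hqa, hqb1, hqb2⟩ := hq
    have hhδ : ∀ i j, |h i j - (1 : Matrix (Fin m ⊕ Fin n) (Fin m ⊕ Fin n) ℝ) i j| ≤ δ' :=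
      fun i j => (hnear i j).le
    have hb1 : 1 ≤ ν₂ q.2 := (one_le_pow_iff_of_nonneg (hν₂nn q.2) (by omega)).mp hqb1
    have hψbn : ψ (ν₂ q.2 ^ n) ≤ ψ 1 := hψle 1 _ le_rfl hqb1
    have haA : ν₁ q.1 ≤ A₀ := by
      rcases le_or_gt (ν₁ q.1) 1 with hle | hgt
      · exact le_trans hle hA₀1
      · have h1 : ν₁ q.1 ≤ ν₁ q.1 ^ m := le_self_pow₀ hgt.le (by omega)
        exact le_trans h1 (le_trans (lt_of_lt_of_le hqa hψbn).le hA₀B)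
    obtain ⟨est1, est2⟩ := est_wrap hc₁ hC₁ hc₂ hC₂ hδ'pos.le hδtpos.le hsum hK₁ hM hA₀nn
      ν₁ ν₂ hlow₁ hlip₁ hlow₂ hlip₂ h h12 hhδ q.1 q.2 haA hb1
    have haup : ν₁ (h.mulVec (Sum.elim q.1 q.2) ∘ Sum.inl) ^ m ≤ (1+ε) * ν₁ q.1 ^ m :=
      pow_upper (hν₁nn q.1) hnn1 f4 est1 f1
    have hbup : ν₂ (h.mulVec (Sum.elim q.1 q.2) ∘ Sum.inr) ^ n ≤ (1+ε) * ν₂ q.2 ^ n :=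
      pow_upper (hν₂nn q.2) hnn2 f5 est2 f2
    have hblo : (1+ε)⁻¹ * ν₂ q.2 ^ n ≤ ν₂ (h.mulVec (Sum.elim q.1 q.2) ∘ Sum.inr) ^ n :=
      pow_lower (hν₂nn q.2) hnn2 f5 est2 hε hε1 f3
    have hb23 : (2/3 : ℝ) ≤ ν₂ (h.mulVec (Sum.elim q.1 q.2) ∘ Sum.inr) ^ n := by
      have h1 : (1+ε)⁻¹ ≤ (1+ε)⁻¹ * ν₂ q.2 ^ n := le_mul_of_one_le_right hinvnn hqb1
      linarith [hblo, hinv23]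
    have hstep : (1+ε) * ν₁ q.1 ^ m < (1+ε) * ψ (ν₂ q.2 ^ n) :=
      mul_lt_mul_of_pos_left hqa h1εpos
    simp only [Eplus, Eprime, Czero, Set.mem_union, Set.mem_setOf_eq]
    rcases le_or_gt (3/2 : ℝ) (ν₂ (h.mulVec (Sum.elim q.1 q.2) ∘ Sum.inr) ^ n) with hcase | hcase
    · left
      refine ⟨?_, hcase, ?_⟩
      · have hs1 : (1:ℝ) ≤ (1+ε)⁻¹ * ν₂ (h.mulVec (Sum.elim q.1 q.2) ∘ Sum.inr) ^ n := by
          have hmm := mul_le_mul hinv23 hcase (by norm_num) hinvnn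
          calc (1:ℝ) = 2/3 * (3/2) := by norm_num
            _ ≤ _ := hmm
        have hs2 : (1+ε)⁻¹ * ν₂ (h.mulVec (Sum.elim q.1 q.2) ∘ Sum.inr) ^ n ≤ ν₂ q.2 ^ n := by
          have hm2 := mul_le_mul_of_nonneg_left hbup hinvnn
          rw [← mul_assoc, inv_mul_cancel₀ (by linarith), one_mul] at hm2
          exact hm2
        have hmono : ψ (ν₂ q.2 ^ n)
            ≤ ψ ((1+ε)⁻¹ * ν₂ (h.mulVec (Sum.elim q.1 q.2) ∘ Sum.inr) ^ n) :=
          hψle _ _ hs1 hs2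
        calc ν₁ (h.mulVec (Sum.elim q.1 q.2) ∘ Sum.inl) ^ m ≤ (1+ε) * ν₁ q.1 ^ m := haup
          _ < (1+ε) * ψ (ν₂ q.2 ^ n) := hstep
          _ ≤ (1+ε) * ψ ((1+ε)⁻¹ * ν₂ (h.mulVec (Sum.elim q.1 q.2) ∘ Sum.inr) ^ n) :=
              mul_le_mul_of_nonneg_left hmono (by linarith)
      · exact lt_of_le_of_lt hbup (mul_lt_mul_of_pos_left hqb2 h1εpos)
    · right
      refine ⟨?_, by linarith, hcase.le⟩
      have h2 : (1+ε) * ψ (ν₂ q.2 ^ n) ≤ (1+ε) * ψ 1 :=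
        mul_le_mul_of_nonneg_left hψbn (by linarith)
      have h3 : (1+ε) * ψ 1 < 2 * ψ 1 :=
        mul_lt_mul_of_pos_right (by linarith) hBpos
      calc ν₁ (h.mulVec (Sum.elim q.1 q.2) ∘ Sum.inl) ^ m ≤ (1+ε) * ν₁ q.1 ^ m := haup
        _ < (1+ε) * ψ (ν₂ q.2 ^ n) := hstep
        _ ≤ (1+ε) * ψ 1 := h2
        _ < 2 * ψ 1 := h3
end

section
/- For every T > 1, the Lebesgue volume of E_T equals c_{ν₁} · c_{ν₂} · ∫₁^T ψ(r) dr. -/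
open MeasureTheory Set Filter
open scoped ENNReal Pointwise

section helper

variable {k : ℕ} {ν : (Fin k → ℝ) → ℝ}

private lemma nu_zero (hsmul : ∀ (c : ℝ) x, ν (c • x) = |c| * ν x) : ν 0 = 0 := by
  have := hsmul 0 0
  simpa using this

private lemma nu_nonneg (hadd : ∀ x y, ν (x + y) ≤ ν x + ν y)
    (hsmul : ∀ (c : ℝ) x, ν (c • x) = |c| * ν x) (x : Fin k → ℝ) : 0 ≤ ν x := by
  have hneg : ν (-x) = ν x := by
    have := hsmul (-1) x; simpa using this
  have h0 : ν 0 ≤ ν x + ν (-x) := by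
    simpa using hadd x (-x)
  rw [nu_zero hsmul, hneg] at h0
  linarith

private lemma nu_cont (hadd : ∀ x y, ν (x + y) ≤ ν x + ν y)
    (hsmul : ∀ (c : ℝ) x, ν (c • x) = |c| * ν x) : Continuous ν := by
  set C : ℝ := ∑ i : Fin k, ν (Pi.single i 1) with hC
  have hC0 : 0 ≤ C := Finset.sum_nonneg fun i _ => nu_nonneg hadd hsmul _
  have key : ∀ x : Fin k → ℝ, ν x ≤ C * ‖x‖ := by
    intro x
    have hx : x = ∑ i : Fin k, Pi.single i (x i) := (Finset.univ_sum_single x).symm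
    have hsum : ν (∑ i : Fin k, Pi.single i (x i)) ≤ ∑ i : Fin k, ν (Pi.single i (x i)) :=
      Finset.le_sum_of_subadditive ν (nu_zero hsmul).le hadd _ _
    have hterm : ∀ i : Fin k, ν (Pi.single i (x i)) ≤ ‖x‖ * ν (Pi.single i 1) := by
      intro i
      have h1 : Pi.single i (x i) = x i • (Pi.single i 1 : Fin k → ℝ) := by
        rw [← Pi.single_smul, smul_eq_mul, mul_one]
      rw [h1, hsmul]
      have h2 : |x i| ≤ ‖x‖ := by
        simpa [Real.norm_eq_abs] using norm_le_pi_norm x i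
      exact mul_le_mul_of_nonneg_right h2 (nu_nonneg hadd hsmul _)
    calc ν x = ν (∑ i : Fin k, Pi.single i (x i)) := by rw [← hx]
      _ ≤ ∑ i : Fin k, ν (Pi.single i (x i)) := hsum
      _ ≤ ∑ i : Fin k, ‖x‖ * ν (Pi.single i 1) := Finset.sum_le_sum fun i _ => hterm i
      _ = C * ‖x‖ := by rw [← Finset.mul_sum, mul_comm]
  have hlip : LipschitzWith C.toNNReal ν := by
    apply LipschitzWith.of_dist_le_mul
    intro x y
    rw [Real.dist_eq, dist_eq_norm]
    have h1 : ν x - ν y ≤ ν (x - y) := by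
      have := hadd (x - y) y; simp only [sub_add_cancel] at this; linarith
    have h2 : ν y - ν x ≤ ν (x - y) := by
      have hneg : ν (y - x) = ν (x - y) := by
        have := hsmul (-1) (x - y); simpa [neg_sub] using this
      have := hadd (y - x) x; simp only [sub_add_cancel] at this; linarith
    have h3 : |ν x - ν y| ≤ ν (x - y) := abs_sub_le_iff.2 ⟨h1, h2⟩
    calc |ν x - ν y| ≤ ν (x - y) := h3
      _ ≤ C * ‖x - y‖ := key _
      _ = (C.toNNReal : ℝ) * ‖x - y‖ := by rw [Real.coe_toNNReal _ hC0]
  exact hlip.continuous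

private lemma nu_lower (hk : 1 ≤ k) (hadd : ∀ x y, ν (x + y) ≤ ν x + ν y)
    (hsmul : ∀ (c : ℝ) x, ν (c • x) = |c| * ν x)
    (hdef : ∀ x, ν x = 0 ↔ x = 0) :
    ∃ ε > 0, ∀ x : Fin k → ℝ, ε * ‖x‖ ≤ ν x := by
  haveI : Nonempty (Fin k) := ⟨⟨0, hk⟩⟩
  have hsph : (Metric.sphere (0 : Fin k → ℝ) 1).Nonempty :=
    NormedSpace.sphere_nonempty.mpr zero_le_one
  obtain ⟨z, hz, hmin⟩ := (isCompact_sphere (0 : Fin k → ℝ) 1).exists_isMinOn hsph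
    ((nu_cont hadd hsmul).continuousOn)
  have hz1 : ‖z‖ = 1 := by simpa using hz
  have hzne : z ≠ 0 := by
    intro h; rw [h] at hz1; simp at hz1
  have hε : 0 < ν z := lt_of_le_of_ne (nu_nonneg hadd hsmul z)
    (fun h => hzne ((hdef z).1 h.symm))
  refine ⟨ν z, hε, fun x => ?_⟩
  rcases eq_or_ne x 0 with rfl | hx
  · simp [nu_zero hsmul]
  · have hnx : 0 < ‖x‖ := norm_pos_iff.2 hx
    have hu : ‖x‖⁻¹ • x ∈ Metric.sphere (0 : Fin k → ℝ) 1 := by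
      simp [norm_smul, abs_of_pos (inv_pos.2 hnx), inv_mul_cancel₀ hnx.ne']
    have h1 : ν z ≤ ν (‖x‖⁻¹ • x) := hmin hu
    rw [hsmul, abs_of_pos (inv_pos.2 hnx)] at h1
    calc ν z * ‖x‖ ≤ (‖x‖⁻¹ * ν x) * ‖x‖ := mul_le_mul_of_nonneg_right h1 hnx.le
      _ = ν x := by field_simp

private lemma nu_fin (hk : 1 ≤ k) (hadd : ∀ x y, ν (x + y) ≤ ν x + ν y)
    (hsmul : ∀ (c : ℝ) x, ν (c • x) = |c| * ν x)
    (hdef : ∀ x, ν x = 0 ↔ x = 0) :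
    volume {y : Fin k → ℝ | ν y < 1} ≠ ⊤ := by
  obtain ⟨ε, hε, hlow⟩ := nu_lower hk hadd hsmul hdef
  have hsub : {y : Fin k → ℝ | ν y < 1} ⊆ Metric.ball 0 (ε⁻¹ + 1) := by
    intro y hy
    simp only [mem_setOf_eq] at hy
    have h1 : ε * ‖y‖ ≤ ν y := hlow y
    have h2 : ‖y‖ ≤ ε⁻¹ := by
      rw [← le_div_iff₀' hε] at h1
      calc ‖y‖ ≤ ν y / ε := h1
        _ ≤ 1 / ε := by gcongr <;> linarith
        _ = ε⁻¹ := one_div ε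
    simp only [Metric.mem_ball, dist_zero_right]
    linarith [inv_pos.2 hε, h2]
  exact ne_top_of_le_ne_top (measure_ball_lt_top).ne (measure_mono hsub)

private lemma nu_scale (hk : 1 ≤ k) (hadd : ∀ x y, ν (x + y) ≤ ν x + ν y)
    (hsmul : ∀ (c : ℝ) x, ν (c • x) = |c| * ν x) (r : ℝ) :
    volume {y : Fin k → ℝ | ν y ^ k < r} =
      ENNReal.ofReal r * volume {y : Fin k → ℝ | ν y < 1} := by
  rcases le_or_gt r 0 with hr | hr
  · have : {y : Fin k → ℝ | ν y ^ k < r} = ∅ := by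
      ext y
      simp only [mem_setOf_eq, mem_empty_iff_false, iff_false, not_lt]
      exact hr.trans (pow_nonneg (nu_nonneg hadd hsmul y) k)
    rw [this, ENNReal.ofReal_of_nonpos hr]
    simp
  · set t : ℝ := r ^ ((k : ℝ)⁻¹) with htdef
    have ht : 0 < t := Real.rpow_pos_of_pos hr _
    have htk : t ^ k = r := Real.rpow_inv_natCast_pow hr.le (by omega)
    have hset : {y : Fin k → ℝ | ν y ^ k < r} = t • {y : Fin k → ℝ | ν y < 1} := by
      ext y
      rw [mem_smul_set_iff_inv_smul_mem₀ ht.ne']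
      simp only [mem_setOf_eq, hsmul, abs_of_pos (inv_pos.2 ht)]
      rw [inv_mul_eq_div, div_lt_one ht, ← htk,
        pow_lt_pow_iff_left₀ (nu_nonneg hadd hsmul y) ht.le (by omega)]
    rw [hset, Measure.addHaar_smul, Module.finrank_fin_fun, htk, abs_of_pos hr]

private lemma nu_dist (hk : 1 ≤ k) (hadd : ∀ x y, ν (x + y) ≤ ν x + ν y)
    (hsmul : ∀ (c : ℝ) x, ν (c • x) = |c| * ν x)
    (hdef : ∀ x, ν x = 0 ↔ x = 0) :
    volume.map (fun y : Fin k → ℝ => ν y ^ k)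
      = volume {y : Fin k → ℝ | ν y < 1} • (volume.restrict (Ici (0 : ℝ))) := by
  set c : ℝ≥0∞ := volume {y : Fin k → ℝ | ν y < 1} with hc
  have hcfin : c ≠ ⊤ := nu_fin hk hadd hsmul hdef
  set g : (Fin k → ℝ) → ℝ := fun y => ν y ^ k with hg
  have hgm : Measurable g := ((nu_cont hadd hsmul).pow k).measurable
  have hIio : ∀ r : ℝ, volume (g ⁻¹' Iio r) = ENNReal.ofReal r * c := by
    intro r
    have : g ⁻¹' Iio r = {y : Fin k → ℝ | ν y ^ k < r} := rfl
    rw [this, nu_scale hk hadd hsmul r]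
  refine Measure.ext_of_Ico' _ _ (fun a b hab => ?_) (fun a b hab => ?_)
  · rw [Measure.map_apply hgm measurableSet_Ico]
    have hsub : g ⁻¹' Ico a b ⊆ g ⁻¹' Iio b := fun y hy => hy.2
    refine ne_top_of_le_ne_top ?_ (measure_mono hsub)
    rw [hIio b]
    exact ENNReal.mul_ne_top ENNReal.ofReal_ne_top hcfin
  · rw [Measure.map_apply hgm measurableSet_Ico]
    have hdiff : g ⁻¹' Ico a b = g ⁻¹' Iio b \ g ⁻¹' Iio a := by
      ext y; simp only [mem_preimage, mem_Ico, mem_diff, mem_Iio, not_lt]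
      tauto
    have hsub2 : g ⁻¹' Iio a ⊆ g ⁻¹' Iio b := fun y hy => lt_trans hy hab
    have hd := measure_diff (μ := volume) hsub2 (hgm measurableSet_Iio).nullMeasurableSet
      (by rw [hIio a]; exact ENNReal.mul_ne_top ENNReal.ofReal_ne_top hcfin)
    rw [hdiff, hd, hIio a, hIio b]
    rw [Measure.smul_apply, Measure.restrict_apply measurableSet_Ico,
      Ico_inter_Ici, Real.volume_Ico, smul_eq_mul]
    rcases le_or_gt a 0 with ha | ha
    · rw [ENNReal.ofReal_of_nonpos ha, zero_mul, tsub_zero, max_eq_right ha, sub_zero,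
        mul_comm]
    · rw [max_eq_left ha.le, ← ENNReal.sub_mul (fun _ _ => hcfin), mul_comm,
        ENNReal.ofReal_sub _ ha.le]

end helper

theorem volume_ET (m n : ℕ) (hm : 1 ≤ m) (hn : 1 ≤ n)
    (ψ : ℝ → ℝ)
    (hψpos : ∀ t : ℝ, 1 ≤ t → 0 < ψ t)
    (hψcont : ContinuousOn ψ (Set.Ici 1))
    (hψanti : AntitoneOn ψ (Set.Ici 1))
    (ν₁ : (Fin m → ℝ) → ℝ)
    (hν₁add : ∀ x y, ν₁ (x + y) ≤ ν₁ x + ν₁ y)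
    (hν₁smul : ∀ (c : ℝ) x, ν₁ (c • x) = |c| * ν₁ x)
    (hν₁def : ∀ x, ν₁ x = 0 ↔ x = 0)
    (ν₂ : (Fin n → ℝ) → ℝ)
    (hν₂add : ∀ x y, ν₂ (x + y) ≤ ν₂ x + ν₂ y)
    (hν₂smul : ∀ (c : ℝ) x, ν₂ (c • x) = |c| * ν₂ x)
    (hν₂def : ∀ x, ν₂ x = 0 ↔ x = 0)
    (T : ℝ) (hT : 1 < T) :
    (volume {p : (Fin m → ℝ) × (Fin n → ℝ) |
        ν₁ p.1 ^ m < ψ (ν₂ p.2 ^ n) ∧ 1 ≤ ν₂ p.2 ^ n ∧ ν₂ p.2 ^ n < T}).toReal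
      = (volume {x : Fin m → ℝ | ν₁ x < 1}).toReal
        * (volume {y : Fin n → ℝ | ν₂ y < 1}).toReal
        * ∫ r in (1:ℝ)..T, ψ r := by
  set c₁ : ℝ≥0∞ := volume {x : Fin m → ℝ | ν₁ x < 1} with hc₁
  set c₂ : ℝ≥0∞ := volume {y : Fin n → ℝ | ν₂ y < 1} with hc₂
  have hc₁fin : c₁ ≠ ⊤ := nu_fin hm hν₁add hν₁smul hν₁def
  have hc₂fin : c₂ ≠ ⊤ := nu_fin hn hν₂add hν₂smul hν₂def
  -- extended psi
  set Ψ : ℝ → ℝ := fun r => ψ (max 1 r) with hΨdef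
  have hΨcont : Continuous Ψ :=
    hψcont.comp_continuous (continuous_const.max continuous_id) (fun r => mem_Ici.2 (le_max_left _ _))
  have hΨeq : ∀ r : ℝ, 1 ≤ r → Ψ r = ψ r := by
    intro r hr; simp only [hΨdef, max_eq_right hr]
  have hΨnonneg : ∀ r : ℝ, 0 ≤ Ψ r := fun r => (hψpos _ (le_max_left _ _)).le
  set g : (Fin n → ℝ) → ℝ := fun y => ν₂ y ^ n with hgdef
  have hgm : Measurable g := ((nu_cont hν₂add hν₂smul).pow n).measurable
  set F : ℝ → ℝ≥0∞ :=
    (Ico (1:ℝ) T).indicator (fun r => ENNReal.ofReal (Ψ r) * c₁) with hFdef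
  have hFm : Measurable F :=
    ((ENNReal.measurable_ofReal.comp hΨcont.measurable).mul measurable_const).indicator
      measurableSet_Ico
  -- the set
  set S : Set ((Fin m → ℝ) × (Fin n → ℝ)) :=
    {p | ν₁ p.1 ^ m < ψ (ν₂ p.2 ^ n) ∧ 1 ≤ ν₂ p.2 ^ n ∧ ν₂ p.2 ^ n < T} with hSdef
  have hSeq : S = {p : (Fin m → ℝ) × (Fin n → ℝ) |
      ν₁ p.1 ^ m < Ψ (g p.2) ∧ 1 ≤ g p.2 ∧ g p.2 < T} := by
    ext p
    simp only [hSdef, mem_setOf_eq]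
    constructor
    · rintro ⟨h1, h2, h3⟩; exact ⟨by rwa [hΨeq _ h2], h2, h3⟩
    · rintro ⟨h1, h2, h3⟩; exact ⟨by rwa [hΨeq _ h2] at h1, h2, h3⟩
  have hcont₁ : Continuous ν₁ := nu_cont hν₁add hν₁smul
  have hScont : MeasurableSet S := by
    rw [hSeq]
    have h1 : Measurable fun p : (Fin m → ℝ) × (Fin n → ℝ) => ν₁ p.1 ^ m :=
      ((hcont₁.comp continuous_fst).pow m).measurable
    have h2 : Measurable fun p : (Fin m → ℝ) × (Fin n → ℝ) => g p.2 :=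
      hgm.comp measurable_snd
    exact (measurableSet_lt h1 ((hΨcont.measurable).comp h2)).inter
      ((measurableSet_le measurable_const h2).inter (measurableSet_lt h2 measurable_const))
  -- slice computation
  have hslice : ∀ y : Fin n → ℝ,
      volume ((fun x : Fin m → ℝ => (x, y)) ⁻¹' S) = F (g y) := by
    intro y
    by_cases h : 1 ≤ g y ∧ g y < T
    · have hpre : (fun x : Fin m → ℝ => (x, y)) ⁻¹' S
          = {x : Fin m → ℝ | ν₁ x ^ m < Ψ (g y)} := by
        ext x
        simp only [hSeq, mem_preimage, mem_setOf_eq]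
        exact ⟨fun hh => hh.1, fun hh => ⟨hh, h.1, h.2⟩⟩
      rw [hpre, nu_scale hm hν₁add hν₁smul]
      rw [hFdef, indicator_of_mem (by exact ⟨h.1, h.2⟩ : g y ∈ Ico (1:ℝ) T)]
    · have hpre : (fun x : Fin m → ℝ => (x, y)) ⁻¹' S = ∅ := by
        ext x
        simp only [hSeq, mem_preimage, mem_setOf_eq, mem_empty_iff_false, iff_false]
        rintro ⟨-, h2, h3⟩; exact h ⟨h2, h3⟩
      rw [hpre, hFdef, indicator_of_notMem (by simpa [mem_Ico] using h)]
      simp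
  -- Fubini
  have hvol : volume S = c₂ * (c₁ * ∫⁻ r in Ico (1:ℝ) T, ENNReal.ofReal (Ψ r)) := by
    rw [Measure.volume_eq_prod, Measure.prod_apply_symm hScont]
    have : ∫⁻ y, volume ((fun x : Fin m → ℝ => (x, y)) ⁻¹' S)
        = ∫⁻ y, F (g y) := lintegral_congr hslice
    rw [this, ← lintegral_map hFm hgm, nu_dist hn hν₂add hν₂smul hν₂def,
      lintegral_smul_measure, hFdef,
      lintegral_indicator measurableSet_Ico, Measure.restrict_restrict measurableSet_Ico]
    have hinter : Ico (1:ℝ) T ∩ Ici (0:ℝ) = Ico (1:ℝ) T := by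
      apply inter_eq_left.2
      intro r hr
      exact le_trans zero_le_one hr.1
    rw [hinter, lintegral_mul_const' c₁ _ hc₁fin]
    ring
  -- finiteness of the integral
  set I : ℝ≥0∞ := ∫⁻ r in Ico (1:ℝ) T, ENNReal.ofReal (Ψ r) with hIdef
  have hIfin : I ≠ ⊤ := by
    have hb : I ≤ ENNReal.ofReal (ψ 1) * volume (Ico (1:ℝ) T) := by
      rw [← setLIntegral_const]
      refine setLIntegral_mono (measurable_const) (fun r hr => ?_)
      refine ENNReal.ofReal_le_ofReal ?_
      rw [hΨeq _ hr.1]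
      exact hψanti (mem_Ici.2 le_rfl) (mem_Ici.2 hr.1) hr.1
    refine ne_top_of_le_ne_top ?_ hb
    rw [Real.volume_Ico]
    exact ENNReal.mul_ne_top ENNReal.ofReal_ne_top ENNReal.ofReal_ne_top
  -- identify the integral
  have hint : ∫ r in (1:ℝ)..T, ψ r = I.toReal := by
    have h1 : ∫ r in (1:ℝ)..T, ψ r = ∫ r in (1:ℝ)..T, Ψ r := by
      refine intervalIntegral.integral_congr (fun r hr => ?_)
      rw [uIcc_of_le hT.le] at hr
      exact (hΨeq _ hr.1).symm
    have h2 : ∫ r in (1:ℝ)..T, Ψ r = ∫ r in Ioc (1:ℝ) T, Ψ r :=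
      intervalIntegral.integral_of_le hT.le
    have h3 : ∫ r in Ioc (1:ℝ) T, Ψ r = ∫ r in Ico (1:ℝ) T, Ψ r := by
      rw [Measure.restrict_congr_set (Ioo_ae_eq_Ioc.symm.trans Ioo_ae_eq_Ico)]
    have h4 : ∫ r in Ico (1:ℝ) T, Ψ r = I.toReal := by
      rw [hIdef, integral_eq_lintegral_of_nonneg_ae
        (Eventually.of_forall fun r => hΨnonneg r)
        (hΨcont.aestronglyMeasurable.restrict)]
    rw [h1, h2, h3, h4]
  -- assemble
  have hSfin := hvol
  calc (volume S).toReal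
      = (c₂ * (c₁ * I)).toReal := by rw [hvol]
    _ = c₂.toReal * (c₁.toReal * I.toReal) := by
        rw [ENNReal.toReal_mul, ENNReal.toReal_mul]
    _ = c₁.toReal * c₂.toReal * I.toReal := by ring
    _ = c₁.toReal * c₂.toReal * ∫ r in (1:ℝ)..T, ψ r := by rw [hint]
end

section
/- There exists a constant C > 0, depending only on ψ, ν₁ and ν₂, such that for all T > 1, |vol(E_T) − c_{ν₁} · c_{ν₂} · Σ_{1 ≤ t < T, t ∈ ℕ} ψ(t)| ≤ C. -/
open MeasureTheory Set Filter
open scoped Pointwise ENNReal NNReal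

section NormBasics
variable {d : ℕ} (ν : (Fin d → ℝ) → ℝ)
  (hadd : ∀ x y, ν (x + y) ≤ ν x + ν y)
  (hsmul : ∀ (c : ℝ) x, ν (c • x) = |c| * ν x)

include hsmul

theorem nu_zero_s6 : ν 0 = 0 := by
  have := hsmul 0 0; simpa using this

theorem nu_neg (x) : ν (-x) = ν x := by
  have := hsmul (-1) x; simpa using this

include hadd

theorem nu_nonneg_s6 (x) : 0 ≤ ν x := by
  have h := hadd x (-x)
  rw [add_neg_cancel, nu_zero_s6 ν hsmul, nu_neg ν hsmul] at h
  linarith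

theorem nu_lipschitz_bound : ∃ C : ℝ, 0 ≤ C ∧ ∀ x, ν x ≤ C * ‖x‖ := by
  classical
  set e : Fin d → (Fin d → ℝ) := fun i j => if i = j then 1 else 0 with he
  refine ⟨∑ i : Fin d, ν (e i), Finset.sum_nonneg fun i _ => nu_nonneg_s6 ν hadd hsmul _, fun x => ?_⟩
  have hx : x = ∑ i : Fin d, (x i) • e i := by
    funext j
    simp only [Finset.sum_apply, Pi.smul_apply, he, smul_eq_mul, mul_ite, mul_one, mul_zero]
    rw [Finset.sum_ite_eq' (Finset.univ : Finset (Fin d)) j x]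
    simp
  calc ν x = ν (∑ i : Fin d, (x i) • e i) := by rw [← hx]
    _ ≤ ∑ i : Fin d, ν ((x i) • e i) :=
        Finset.le_sum_of_subadditive ν (nu_zero_s6 ν hsmul).le hadd _ _
    _ = ∑ i : Fin d, |x i| * ν (e i) := by simp only [hsmul]
    _ ≤ ∑ i : Fin d, ‖x‖ * ν (e i) := by
        refine Finset.sum_le_sum fun i _ => ?_
        exact mul_le_mul_of_nonneg_right (by simpa using norm_le_pi_norm x i)
          (nu_nonneg_s6 ν hadd hsmul _)
    _ = (∑ i : Fin d, ν (e i)) * ‖x‖ := by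
        rw [Finset.sum_mul]
        exact Finset.sum_congr rfl fun i _ => mul_comm _ _

theorem nu_continuous : Continuous ν := by
  obtain ⟨C, hC0, hC⟩ := nu_lipschitz_bound ν hadd hsmul
  have key : ∀ x y : Fin d → ℝ, |ν x - ν y| ≤ C * ‖x - y‖ := by
    intro x y
    have h1 : ν x ≤ ν (x - y) + ν y := by
      have := hadd (x - y) y; simpa using this
    have h2 : ν y ≤ ν (x - y) + ν x := by
      have := hadd (y - x) x
      rw [sub_add_cancel] at this
      have hneg : ν (y - x) = ν (x - y) := by
        rw [← nu_neg ν hsmul (x - y)]; congr 1; abel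
      linarith [this, hneg.le, hneg.ge]
    have := hC (x - y)
    rw [abs_sub_le_iff]; constructor <;> linarith
  rw [Metric.continuous_iff]
  intro x ε hε
  rcases eq_or_lt_of_le hC0 with h | h
  · exact ⟨1, one_pos, fun y _ => by
      have := key y x
      rw [← h, zero_mul] at this
      rw [Real.dist_eq]
      calc |ν y - ν x| ≤ 0 := this
        _ < ε := hε⟩
  · refine ⟨ε / C, by positivity, fun y hy => ?_⟩
    have := key y x
    rw [Real.dist_eq]
    calc |ν y - ν x| ≤ C * ‖y - x‖ := this
      _ < C * (ε / C) := by
          apply mul_lt_mul_of_pos_left _ h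
          rw [dist_eq_norm] at hy; exact hy
      _ = ε := by field_simp

end NormBasics

section NormMeasure
variable {d : ℕ} (ν : (Fin d → ℝ) → ℝ)
  (hadd : ∀ x y, ν (x + y) ≤ ν x + ν y)
  (hsmul : ∀ (c : ℝ) x, ν (c • x) = |c| * ν x)

include hadd hsmul

theorem nu_c_pos : 0 < volume {x : Fin d → ℝ | ν x < 1} := by
  have hopen : IsOpen {x : Fin d → ℝ | ν x < 1} :=
    isOpen_lt (nu_continuous ν hadd hsmul) continuous_const
  refine hopen.measure_pos volume ⟨0, ?_⟩
  simp [Set.mem_setOf_eq, nu_zero_s6 ν hsmul]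

theorem nu_lower_bound (hdef : ∀ x, ν x = 0 ↔ x = 0) (hd : 1 ≤ d) :
    ∃ c : ℝ, 0 < c ∧ ∀ x, c * ‖x‖ ≤ ν x := by
  haveI : Nonempty (Fin d) := ⟨⟨0, hd⟩⟩
  have hsph : (Metric.sphere (0 : Fin d → ℝ) 1).Nonempty := by
    refine ⟨fun _ => 1, ?_⟩
    simp [Metric.mem_sphere, dist_zero_right]
  obtain ⟨z, hz, hmin⟩ := (isCompact_sphere (0 : Fin d → ℝ) 1).exists_isMinOn hsph
    ((nu_continuous ν hadd hsmul).continuousOn)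
  have hz1 : ‖z‖ = 1 := by simpa using hz
  have hz0 : z ≠ 0 := by
    intro h; rw [h] at hz1; simp at hz1
  have hc0 : 0 < ν z := by
    rcases lt_or_eq_of_le (nu_nonneg_s6 ν hadd hsmul z) with h | h
    · exact h
    · exact absurd ((hdef z).mp h.symm) hz0
  refine ⟨ν z, hc0, fun x => ?_⟩
  rcases eq_or_ne x 0 with rfl | hx
  · simp [nu_zero_s6 ν hsmul]
  · have hxn : (0:ℝ) < ‖x‖ := norm_pos_iff.mpr hx
    have hu : ‖x‖⁻¹ • x ∈ Metric.sphere (0 : Fin d → ℝ) 1 := by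
      simp [norm_smul, abs_of_pos (inv_pos.mpr hxn), inv_mul_cancel₀ hxn.ne']
    have h1 : ν z ≤ ν (‖x‖⁻¹ • x) := hmin hu
    have h2 : ν (‖x‖⁻¹ • x) = ‖x‖⁻¹ * ν x := by
      rw [hsmul]; rw [abs_of_pos (inv_pos.mpr hxn)]
    rw [h2] at h1
    calc ν z * ‖x‖ ≤ (‖x‖⁻¹ * ν x) * ‖x‖ := by
          exact mul_le_mul_of_nonneg_right h1 hxn.le
      _ = ν x := by field_simp
 
theorem nu_c_lt_top (hdef : ∀ x, ν x = 0 ↔ x = 0) (hd : 1 ≤ d) :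
    volume {x : Fin d → ℝ | ν x < 1} < ⊤ := by
  obtain ⟨c, hc, hcle⟩ := nu_lower_bound ν hadd hsmul hdef hd
  have hsub : {x : Fin d → ℝ | ν x < 1} ⊆ Metric.ball 0 (c⁻¹ + 1) := by
    intro x hx
    simp only [Set.mem_setOf_eq] at hx
    have := hcle x
    rw [Metric.mem_ball, dist_zero_right]
    by_contra hge
    push_neg at hge
    have h1 : c * (c⁻¹ + 1) ≤ c * ‖x‖ := mul_le_mul_of_nonneg_left hge hc.le
    rw [mul_add, mul_inv_cancel₀ hc.ne', mul_one] at h1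
    linarith [hcle x]
  exact lt_of_le_of_lt (measure_mono hsub) measure_ball_lt_top

theorem nu_meas_lt (hd : 1 ≤ d) (r : ℝ) (hr : 0 ≤ r) :
    volume {x : Fin d → ℝ | ν x < r}
      = ENNReal.ofReal (r ^ d) * volume {x : Fin d → ℝ | ν x < 1} := by
  rcases eq_or_lt_of_le hr with rfl | hr
  · have : {x : Fin d → ℝ | ν x < 0} = ∅ := by
      ext x; simp [not_lt.mpr (nu_nonneg_s6 ν hadd hsmul x)]
    rw [this]
    simp [zero_pow (by omega : d ≠ 0)]
  · have hset : {x : Fin d → ℝ | ν x < r} = r • {x : Fin d → ℝ | ν x < 1} := by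
      ext x
      rw [Set.mem_smul_set_iff_inv_smul_mem₀ hr.ne']
      simp only [Set.mem_setOf_eq, hsmul, abs_of_pos (inv_pos.mpr hr)]
      rw [inv_mul_lt_iff₀ hr, mul_one]
    rw [hset, Measure.addHaar_smul, Module.finrank_fin_fun, abs_of_nonneg (pow_nonneg hr.le d)]

theorem nu_meas_pow_lt (hd : 1 ≤ d) (a : ℝ) :
    volume {x : Fin d → ℝ | ν x ^ d < a}
      = ENNReal.ofReal a * volume {x : Fin d → ℝ | ν x < 1} := by
  rcases le_or_gt a 0 with ha | ha
  · have : {x : Fin d → ℝ | ν x ^ d < a} = ∅ := by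
      ext x
      simp only [Set.mem_setOf_eq, Set.mem_empty_iff_false, iff_false, not_lt]
      exact ha.trans (pow_nonneg (nu_nonneg_s6 ν hadd hsmul x) d)
    rw [this, ENNReal.ofReal_eq_zero.mpr ha]
    simp
  · set r : ℝ := a ^ ((d:ℝ)⁻¹) with hrdef
    have hr0 : 0 ≤ r := Real.rpow_nonneg ha.le _
    have hrd : r ^ d = a := by
      rw [hrdef, ← Real.rpow_natCast (a ^ ((d:ℝ)⁻¹)) d, ← Real.rpow_mul ha.le]
      rw [inv_mul_cancel₀ (by positivity : (d:ℝ) ≠ 0), Real.rpow_one]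
    have hset : {x : Fin d → ℝ | ν x ^ d < a} = {x : Fin d → ℝ | ν x < r} := by
      ext x
      simp only [Set.mem_setOf_eq]
      rw [← hrd]
      exact pow_lt_pow_iff_left₀ (nu_nonneg_s6 ν hadd hsmul x) hr0 (by omega)
    rw [hset, nu_meas_lt ν hadd hsmul hd r hr0, hrd]

end NormMeasure

section NormMap
variable {d : ℕ} (ν : (Fin d → ℝ) → ℝ)
  (hadd : ∀ x y, ν (x + y) ≤ ν x + ν y)
  (hsmul : ∀ (c : ℝ) x, ν (c • x) = |c| * ν x)
  (hdef : ∀ x, ν x = 0 ↔ x = 0) (hd : 1 ≤ d)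

include hadd hsmul hdef hd

theorem nu_map :
    Measure.map (fun y : Fin d → ℝ => ν y ^ d) volume
      = volume {x : Fin d → ℝ | ν x < 1} • volume.restrict (Set.Ici (0:ℝ)) := by
  set c := volume {x : Fin d → ℝ | ν x < 1} with hc
  have hctop : c ≠ ⊤ := (nu_c_lt_top ν hadd hsmul hdef hd).ne
  have hg : Measurable (fun y : Fin d → ℝ => ν y ^ d) :=
    ((nu_continuous ν hadd hsmul).pow d).measurable
  have hIio : ∀ t : ℝ, Measure.map (fun y : Fin d → ℝ => ν y ^ d) volume (Set.Iio t)
      = ENNReal.ofReal t * c := by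
    intro t
    rw [Measure.map_apply hg measurableSet_Iio]
    have : (fun y : Fin d → ℝ => ν y ^ d) ⁻¹' Set.Iio t = {x : Fin d → ℝ | ν x ^ d < t} := rfl
    rw [this, nu_meas_pow_lt ν hadd hsmul hd t]
  have hIcofin : ∀ a b : ℝ, a < b →
      Measure.map (fun y : Fin d → ℝ => ν y ^ d) volume (Set.Ico a b) ≠ ⊤ := by
    intro a b _
    refine ne_top_of_le_ne_top ?_ (measure_mono (Set.Ico_subset_Iio_self))
    rw [hIio b]
    exact ENNReal.mul_ne_top ENNReal.ofReal_ne_top hctop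
  refine Measure.ext_of_Ico' _ _ hIcofin ?_
  intro a b hab
  have hIcoL : Measure.map (fun y : Fin d → ℝ => ν y ^ d) volume (Set.Ico a b)
      = ENNReal.ofReal b * c - ENNReal.ofReal a * c := by
    have hdiff : Set.Ico a b = Set.Iio b \ Set.Iio a := by ext t; simp [and_comm]
    rw [hdiff, measure_diff (Set.Iio_subset_Iio hab.le)
      (measurableSet_Iio.nullMeasurableSet)
      (by rw [hIio a]; exact ENNReal.mul_ne_top ENNReal.ofReal_ne_top hctop),
      hIio a, hIio b]
  rw [hIcoL, Measure.smul_apply, smul_eq_mul, Measure.restrict_apply measurableSet_Ico]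
  have hinter : Set.Ico a b ∩ Set.Ici 0 = Set.Ico (max a 0) b := by
    ext t; simp only [Set.mem_inter_iff, Set.mem_Ico, Set.mem_Ici, max_le_iff]
    constructor
    · rintro ⟨⟨h1, h2⟩, h3⟩; exact ⟨⟨h1, h3⟩, h2⟩
    · rintro ⟨⟨h1, h3⟩, h2⟩; exact ⟨⟨h1, h2⟩, h3⟩
  rw [hinter, Real.volume_Ico]
  rcases le_or_gt b 0 with hb | hb
  · rw [ENNReal.ofReal_eq_zero.mpr hb, zero_mul]
    have hble : b - max a 0 ≤ 0 := by
      have := le_max_right a 0; linarith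
    rw [ENNReal.ofReal_eq_zero.mpr hble, mul_zero]
    exact zero_tsub _
  · rcases le_or_gt a 0 with ha | ha
    · rw [max_eq_right ha, ENNReal.ofReal_eq_zero.mpr ha, zero_mul, tsub_zero, sub_zero,
        mul_comm]
    · have hsm : (ENNReal.ofReal b - ENNReal.ofReal a) * c
          = ENNReal.ofReal b * c - ENNReal.ofReal a * c :=
        ENNReal.sub_mul (fun _ _ => hctop)
      rw [max_eq_left ha.le, ← hsm, ← ENNReal.ofReal_sub b ha.le, mul_comm]

theorem nu_lintegral (F : ℝ → ℝ≥0∞) (hF : Measurable F) :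
    ∫⁻ y : Fin d → ℝ, F (ν y ^ d)
      = volume {x : Fin d → ℝ | ν x < 1} * ∫⁻ t in Set.Ici (0:ℝ), F t := by
  have hg : Measurable (fun y : Fin d → ℝ => ν y ^ d) :=
    ((nu_continuous ν hadd hsmul).pow d).measurable
  rw [← lintegral_map hF hg, nu_map ν hadd hsmul hdef hd, lintegral_smul_measure, smul_eq_mul]

end NormMap

section SumIntegral

theorem interval_int_bounds (f : ℝ → ℝ) (hf : Antitone f) {a b : ℝ} (hab : a ≤ b) :
    f b * (b - a) ≤ (∫ t in a..b, f t) ∧ (∫ t in a..b, f t) ≤ f a * (b - a) := by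
  constructor
  · have h := intervalIntegral.integral_mono_on hab (intervalIntegrable_const (μ := volume) (c := f b))
      (hf.intervalIntegrable) (fun u hu => hf hu.2)
    rwa [intervalIntegral.integral_const, smul_eq_mul, mul_comm] at h
  · have h := intervalIntegral.integral_mono_on hab (hf.intervalIntegrable)
      (intervalIntegrable_const (μ := volume) (c := f a)) (fun u hu => hf hu.1)
    rwa [intervalIntegral.integral_const, smul_eq_mul, mul_comm] at h

theorem int_bounds (f : ℝ → ℝ) (hf : Antitone f) (j : ℕ) :
    (∑ i ∈ Finset.range j, f (2 + i)) ≤ (∫ t in (1:ℝ)..(1 + j), f t) ∧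
      (∫ t in (1:ℝ)..(1 + j), f t) ≤ ∑ i ∈ Finset.range j, f (1 + i) := by
  induction j with
  | zero => simp
  | succ j ih =>
    have hcast : (1:ℝ) + ((j:ℕ)+1 : ℕ) = 2 + (j:ℝ) := by push_cast; ring
    have hIadd : (∫ t in (1:ℝ)..(2 + (j:ℝ)), f t)
        = (∫ t in (1:ℝ)..(1 + (j:ℝ)), f t) + ∫ t in (1 + (j:ℝ))..(2 + (j:ℝ)), f t :=
      (intervalIntegral.integral_add_adjacent_intervals
        hf.intervalIntegrable hf.intervalIntegrable).symm
    have hb := interval_int_bounds f hf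
      (by linarith [(Nat.cast_nonneg j : (0:ℝ) ≤ (j:ℝ))] : (1 + (j:ℝ)) ≤ 2 + (j:ℝ))
    have h2 : (2 + (j:ℝ) - (1 + (j:ℝ))) = 1 := by ring
    rw [h2, mul_one] at hb
    rw [Finset.sum_range_succ, Finset.sum_range_succ, hcast, hIadd]
    constructor
    · linarith [ih.1, hb.1]
    · linarith [ih.2, hb.2]

theorem integral_sum_compare (f : ℝ → ℝ) (hf : Antitone f) (hfpos : ∀ t, 0 ≤ f t)
    (T : ℝ) (hT : 1 < T) :
    |(∫ t in Set.Ico (1:ℝ) T, f t) - ∑ t ∈ Finset.Ico 1 ⌈T⌉₊, f t| ≤ f 1 := by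
  set K := ⌈T⌉₊ with hK
  have hK1 : 1 < K := by
    rw [hK, Nat.lt_ceil]; exact_mod_cast hT
  have hTK : T ≤ (K:ℝ) := Nat.le_ceil T
  have hKT : (K:ℝ) - 1 < T := by
    have := Nat.ceil_lt_add_one (by linarith : (0:ℝ) ≤ T)
    rw [← hK] at this; linarith
  have hIoc : (∫ t in Set.Ico (1:ℝ) T, f t) = ∫ t in (1:ℝ)..T, f t := by
    rw [setIntegral_congr_set Ico_ae_eq_Ioc, intervalIntegral.integral_of_le hT.le]
  set S := ∑ t ∈ Finset.Ico 1 K, f t with hS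
  set I := ∫ t in (1:ℝ)..T, f t with hI
  -- upper bound : I ≤ S
  have hup : I ≤ S := by
    have h1 : I ≤ ∫ t in (1:ℝ)..(K:ℝ), f t := by
      have hadj : (∫ t in (1:ℝ)..T, f t) + (∫ t in T..(K:ℝ), f t)
          = ∫ t in (1:ℝ)..(K:ℝ), f t :=
        intervalIntegral.integral_add_adjacent_intervals
          (hf.intervalIntegrable) (hf.intervalIntegrable)
      have hnn : 0 ≤ ∫ t in T..(K:ℝ), f t :=
        intervalIntegral.integral_nonneg hTK (fun u _ => hfpos u)
      linarith
    have hcast : ((K:ℝ)) = 1 + ((K - 1 : ℕ) : ℝ) := by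
      have : (1:ℕ) ≤ K := hK1.le
      push_cast [Nat.cast_sub this]
      ring
    rw [hcast] at h1
    have h2 := (int_bounds f hf (K - 1)).2
    have h3 : S = ∑ i ∈ Finset.range (K - 1), f (1 + i) := by
      rw [hS, Finset.sum_Ico_eq_sum_range]
      refine Finset.sum_congr rfl fun i _ => ?_
      push_cast; ring_nf
    rw [h3]
    exact le_trans h1 h2
  -- lower bound : S - f 1 ≤ I
  have hlow : S - f 1 ≤ I := by
    have h1 : (∫ t in (1:ℝ)..((K:ℝ) - 1), f t) ≤ I := by
      have hadj : (∫ t in (1:ℝ)..((K:ℝ)-1), f t) + (∫ t in ((K:ℝ)-1)..T, f t)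
          = ∫ t in (1:ℝ)..T, f t :=
        intervalIntegral.integral_add_adjacent_intervals
          (hf.intervalIntegrable) (hf.intervalIntegrable)
      have hnn : 0 ≤ ∫ t in ((K:ℝ)-1)..T, f t :=
        intervalIntegral.integral_nonneg hKT.le (fun u _ => hfpos u)
      rw [hI]
      linarith
    have hcast : ((K:ℝ) - 1) = 1 + ((K - 2 : ℕ) : ℝ) := by
      have : (2:ℕ) ≤ K := hK1
      push_cast [Nat.cast_sub this]
      ring
    rw [hcast] at h1
    have h2 := (int_bounds f hf (K - 2)).1
    have h3 : S - f 1 = ∑ i ∈ Finset.range (K - 2), f (2 + i) := by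
      rw [hS, Finset.sum_eq_sum_Ico_succ_bot hK1, Finset.sum_Ico_eq_sum_range]
      have : K - 2 = K - (1 + 1) := by omega
      rw [this]
      have heq : ∀ i ∈ Finset.range (K - (1+1)), f ((((1+1) + i : ℕ)):ℝ) = f (2 + (i:ℝ)) := by
        intro i _; push_cast; ring_nf
      rw [Finset.sum_congr rfl heq]
      push_cast
      ring
    rw [h3]
    exact le_trans h2 h1
  rw [hIoc]
  rw [abs_le]
  constructor <;> [linarith; linarith [hfpos 1, hup]]

end SumIntegral

theorem volume_ET_sum (m n : ℕ) (hm : 1 ≤ m) (hn : 1 ≤ n)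
    (ψ : ℝ → ℝ)
    (hψpos : ∀ t : ℝ, 1 ≤ t → 0 < ψ t)
    (hψcont : ContinuousOn ψ (Set.Ici 1))
    (hψanti : AntitoneOn ψ (Set.Ici 1))
    (ν₁ : (Fin m → ℝ) → ℝ)
    (hν₁add : ∀ x y, ν₁ (x + y) ≤ ν₁ x + ν₁ y)
    (hν₁smul : ∀ (c : ℝ) x, ν₁ (c • x) = |c| * ν₁ x)
    (hν₁def : ∀ x, ν₁ x = 0 ↔ x = 0)
    (ν₂ : (Fin n → ℝ) → ℝ)
    (hν₂add : ∀ x y, ν₂ (x + y) ≤ ν₂ x + ν₂ y)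
    (hν₂smul : ∀ (c : ℝ) x, ν₂ (c • x) = |c| * ν₂ x)
    (hν₂def : ∀ x, ν₂ x = 0 ↔ x = 0) :
    ∃ C : ℝ, 0 < C ∧ ∀ T : ℝ, 1 < T →
      |(volume {p : (Fin m → ℝ) × (Fin n → ℝ) |
          ν₁ p.1 ^ m < ψ (ν₂ p.2 ^ n) ∧ 1 ≤ ν₂ p.2 ^ n ∧ ν₂ p.2 ^ n < T}).toReal
        - (volume {x : Fin m → ℝ | ν₁ x < 1}).toReal
          * (volume {y : Fin n → ℝ | ν₂ y < 1}).toReal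
          * ∑ t ∈ Finset.Ico 1 ⌈T⌉₊, ψ t| ≤ C := by
  classical
  -- the modified ψ, continuous and antitone on all of ℝ
  set ψ' : ℝ → ℝ := fun t => ψ (max 1 t) with hψ'def
  have hψ'cont : Continuous ψ' :=
    hψcont.comp_continuous (continuous_const.max continuous_id) (fun t => le_max_left 1 t)
  have hψ'anti : Antitone ψ' := fun s t hst =>
    hψanti (le_max_left 1 s) (le_max_left 1 t) (max_le_max le_rfl hst)
  have hψ'pos : ∀ t, 0 < ψ' t := fun t => hψpos _ (le_max_left 1 t)
  have hψ'one : ψ' 1 = ψ 1 := by simp [hψ'def]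
  have hψ'eq : ∀ t : ℝ, 1 ≤ t → ψ' t = ψ t := fun t ht => by
    simp [hψ'def, max_eq_right ht]
  -- the constants
  set c₁ := volume {x : Fin m → ℝ | ν₁ x < 1} with hc₁
  set c₂ := volume {y : Fin n → ℝ | ν₂ y < 1} with hc₂
  have hc₁pos : 0 < c₁ := nu_c_pos ν₁ hν₁add hν₁smul
  have hc₂pos : 0 < c₂ := nu_c_pos ν₂ hν₂add hν₂smul
  have hc₁top : c₁ < ⊤ := nu_c_lt_top ν₁ hν₁add hν₁smul hν₁def hm
  have hc₂top : c₂ < ⊤ := nu_c_lt_top ν₂ hν₂add hν₂smul hν₂def hn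
  set r₁ := c₁.toReal with hr₁
  set r₂ := c₂.toReal with hr₂
  have hr₁pos : 0 < r₁ := ENNReal.toReal_pos hc₁pos.ne' hc₁top.ne
  have hr₂pos : 0 < r₂ := ENNReal.toReal_pos hc₂pos.ne' hc₂top.ne
  refine ⟨r₁ * r₂ * ψ 1, by have h1 := hψpos 1 le_rfl; positivity, fun T hT => ?_⟩
  -- continuity facts
  have hcont₁ : Continuous ν₁ := nu_continuous ν₁ hν₁add hν₁smul
  have hcont₂ : Continuous ν₂ := nu_continuous ν₂ hν₂add hν₂smul
  set g : (Fin n → ℝ) → ℝ := fun y => ν₂ y ^ n with hg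
  have hgcont : Continuous g := hcont₂.pow n
  -- indicator function
  set F : ℝ → ℝ≥0∞ := (Set.Ico (1:ℝ) T).indicator (fun t => ENNReal.ofReal (ψ' t)) with hF
  have hFmeas : Measurable F :=
    (ENNReal.measurable_ofReal.comp hψ'cont.measurable).indicator measurableSet_Ico
  -- rewrite with ψ'
  have hsetEq : {p : (Fin m → ℝ) × (Fin n → ℝ) |
        ν₁ p.1 ^ m < ψ (ν₂ p.2 ^ n) ∧ 1 ≤ ν₂ p.2 ^ n ∧ ν₂ p.2 ^ n < T}
      = {p : (Fin m → ℝ) × (Fin n → ℝ) |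
        ν₁ p.1 ^ m < ψ' (g p.2) ∧ 1 ≤ g p.2 ∧ g p.2 < T} := by
    ext p
    simp only [Set.mem_setOf_eq, hg]
    constructor
    · rintro ⟨h1, h2, h3⟩
      exact ⟨by rwa [hψ'eq _ h2], h2, h3⟩
    · rintro ⟨h1, h2, h3⟩
      exact ⟨by rwa [hψ'eq _ h2] at h1, h2, h3⟩
  set S := {p : (Fin m → ℝ) × (Fin n → ℝ) |
        ν₁ p.1 ^ m < ψ' (g p.2) ∧ 1 ≤ g p.2 ∧ g p.2 < T} with hSdef
  have hSmeas : MeasurableSet S := by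
    have h1 : MeasurableSet {p : (Fin m → ℝ) × (Fin n → ℝ) | ν₁ p.1 ^ m < ψ' (g p.2)} :=
      measurableSet_lt ((hcont₁.comp continuous_fst).pow m).measurable
        ((hψ'cont.comp (hgcont.comp continuous_snd)).measurable)
    have h2 : MeasurableSet {p : (Fin m → ℝ) × (Fin n → ℝ) | 1 ≤ g p.2} :=
      measurableSet_le measurable_const (hgcont.comp continuous_snd).measurable
    have h3 : MeasurableSet {p : (Fin m → ℝ) × (Fin n → ℝ) | g p.2 < T} :=
      measurableSet_lt (hgcont.comp continuous_snd).measurable measurable_const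
    have : S = {p : (Fin m → ℝ) × (Fin n → ℝ) | ν₁ p.1 ^ m < ψ' (g p.2)}
        ∩ ({p | 1 ≤ g p.2} ∩ {p | g p.2 < T}) := by
      ext p; simp [hSdef, Set.mem_setOf_eq, and_assoc]
    rw [this]
    exact h1.inter (h2.inter h3)
  -- slice volumes
  have hslice : ∀ y : Fin n → ℝ,
      volume ((fun x => (x, y)) ⁻¹' S) = c₁ * F (g y) := by
    intro y
    by_cases hy : 1 ≤ g y ∧ g y < T
    · have hpre : (fun x => (x, y)) ⁻¹' S = {x : Fin m → ℝ | ν₁ x ^ m < ψ' (g y)} := by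
        ext x
        simp [hSdef, Set.mem_setOf_eq, hy.1, hy.2]
      rw [hpre, nu_meas_pow_lt ν₁ hν₁add hν₁smul hm (ψ' (g y))]
      rw [hF, Set.indicator_of_mem (Set.mem_Ico.mpr hy)]
      rw [mul_comm, ← hc₁]
    · have hpre : (fun x => (x, y)) ⁻¹' S = (∅ : Set (Fin m → ℝ)) := by
        ext x
        simp only [Set.mem_preimage, hSdef, Set.mem_setOf_eq, Set.mem_empty_iff_false,
          iff_false]
        rintro ⟨-, h2, h3⟩
        exact hy ⟨h2, h3⟩
      rw [hpre, hF, Set.indicator_of_notMem (fun hmem => hy (Set.mem_Ico.mp hmem))]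
      simp
  -- the main volume computation
  have hvol : volume S = c₁ * (c₂ * ∫⁻ t in Set.Ici (0:ℝ), F t) := by
    rw [show (volume : Measure ((Fin m → ℝ) × (Fin n → ℝ)))
        = (volume : Measure (Fin m → ℝ)).prod (volume : Measure (Fin n → ℝ)) from
        MeasureTheory.Measure.volume_eq_prod _ _]
    rw [Measure.prod_apply_symm hSmeas]
    calc ∫⁻ y, volume ((fun x => (x, y)) ⁻¹' S)
        = ∫⁻ y, c₁ * F (g y) := by
          exact lintegral_congr fun y => hslice y
      _ = c₁ * ∫⁻ y, F (g y) := lintegral_const_mul c₁ (hFmeas.comp hgcont.measurable)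
      _ = c₁ * (c₂ * ∫⁻ t in Set.Ici (0:ℝ), F t) := by
          rw [nu_lintegral ν₂ hν₂add hν₂smul hν₂def hn F hFmeas]
  -- compute the lintegral of F
  have hIcoInter : Set.Ico (1:ℝ) T ∩ Set.Ici (0:ℝ) = Set.Ico (1:ℝ) T :=
    Set.inter_eq_left.mpr (fun t ht => le_trans zero_le_one ht.1)
  have hFint : (∫⁻ t in Set.Ici (0:ℝ), F t)
      = ∫⁻ t in Set.Ico (1:ℝ) T, ENNReal.ofReal (ψ' t) := by
    rw [hF, lintegral_indicator measurableSet_Ico, Measure.restrict_restrict measurableSet_Ico,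
      hIcoInter]
  -- integrability of ψ' on Ico 1 T
  have hψ'int : IntegrableOn ψ' (Set.Ico (1:ℝ) T) volume := by
    have h1 : IntegrableOn ψ' (Set.Icc (1:ℝ) T) volume :=
      AntitoneOn.integrableOn_isCompact isCompact_Icc (hψ'anti.antitoneOn _)
    exact h1.mono_set Set.Ico_subset_Icc_self
  set I := ∫ t in Set.Ico (1:ℝ) T, ψ' t with hIdef
  have hInn : 0 ≤ I := setIntegral_nonneg measurableSet_Ico (fun t _ => (hψ'pos t).le)
  have hFI : (∫⁻ t in Set.Ico (1:ℝ) T, ENNReal.ofReal (ψ' t)) = ENNReal.ofReal I := by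
    rw [hIdef, ← ofReal_integral_eq_lintegral_ofReal hψ'int
      (Filter.Eventually.of_forall (fun t => (hψ'pos t).le))]
  -- toReal
  have htoReal : (volume S).toReal = r₁ * (r₂ * I) := by
    rw [hvol, hFint, hFI, ENNReal.toReal_mul, ENNReal.toReal_mul, ENNReal.toReal_ofReal hInn]
  -- reconcile sums
  have hsum : (∑ t ∈ Finset.Ico 1 ⌈T⌉₊, ψ t) = ∑ t ∈ Finset.Ico 1 ⌈T⌉₊, ψ' t := by
    refine Finset.sum_congr rfl fun t ht => ?_
    have h1 : (1:ℕ) ≤ t := (Finset.mem_Ico.mp ht).1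
    have : (1:ℝ) ≤ (t:ℝ) := by exact_mod_cast h1
    rw [hψ'eq _ this]
  rw [hsetEq, htoReal, hsum]
  have hcompare := integral_sum_compare ψ' hψ'anti (fun t => (hψ'pos t).le) T hT
  rw [← hIdef] at hcompare
  have hr : r₁ * (r₂ * I) - r₁ * r₂ * (∑ t ∈ Finset.Ico 1 ⌈T⌉₊, ψ' t)
      = r₁ * r₂ * (I - ∑ t ∈ Finset.Ico 1 ⌈T⌉₊, ψ' t) := by ring
  rw [hr, abs_mul, abs_of_nonneg (by positivity : (0:ℝ) ≤ r₁ * r₂), ← hψ'one]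
  exact mul_le_mul_of_nonneg_left hcompare (by positivity)
end
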